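/- arXiv:1605.02124 — 5 statements merged into one kernel-verified Lean document; each statement's English description precedes it below -/
import Mathlib

section
/- If G is a connected graph of order n ≥ 2 with forcing number F(G) = 1, then G is isomorphic to the path P_n. Conversely, F(P_n) = 1. -/
open SimpleGraph

variable {V : Type*}

/-- One step of the (zero) forcing process: a colored vertex with exactly one
uncolored neighbor forces that neighbor to become colored. -/
def zfStep (G : SimpleGraph V) (S : Set V) : Set V :=
  S ∪ {w | ∃ v ∈ S, G.neighborSet v \ S = {w}}

/-- `S` is a forcing set if iterating the forcing process colors all vertices. -/
def IsForcingSet (G : SimpleGraph V) (S : Set V) : Prop :=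
  ∃ n : ℕ, (zfStep G)^[n] S = Set.univ

/-- A connected forcing set: a forcing set inducing a connected subgraph. -/
def IsConnForcingSet (G : SimpleGraph V) (S : Set V) : Prop :=
  IsForcingSet G S ∧ (G.induce S).Connected

/-- The forcing number `F(G)`. -/
noncomputable def forcingNumber (G : SimpleGraph V) : ℕ :=
  sInf (Set.ncard '' {S : Set V | IsForcingSet G S})

/-- The connected forcing number `F_c(G)`. -/
noncomputable def connForcingNumber (G : SimpleGraph V) : ℕ :=
  sInf (Set.ncard '' {S : Set V | IsConnForcingSet G S})

lemma subset_zfStep (G : SimpleGraph V) (S : Set V) : S ⊆ zfStep G S :=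
  Set.subset_union_left

lemma iterate_zfStep_mono (G : SimpleGraph V) (S : Set V) {k m : ℕ} (h : k ≤ m) :
    (zfStep G)^[k] S ⊆ (zfStep G)^[m] S := by
  have hmono : Monotone (fun k => (zfStep G)^[k] S) :=
    monotone_nat_of_le_succ fun k => by
      rw [Function.iterate_succ_apply']
      exact subset_zfStep G _
  exact hmono h

lemma not_stuck {G : SimpleGraph V} {S : Set V} (hF : IsForcingSet G S) {k : ℕ}
    (hne : (zfStep G)^[k] S ≠ Set.univ) :
    zfStep G ((zfStep G)^[k] S) ≠ (zfStep G)^[k] S := by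
  intro hfix
  obtain ⟨m, hm⟩ := hF
  rcases le_or_gt m k with h | h
  · exact hne (Set.eq_univ_of_univ_subset (hm ▸ iterate_zfStep_mono G S h))
  · have heq : (zfStep G)^[m] S = (zfStep G)^[k] S := by
      have hmk : m = (m - k) + k := by omega
      rw [hmk, Function.iterate_add_apply, Function.iterate_fixed hfix]
    exact hne (heq ▸ hm)

/-- The structure carried along the forcing process starting from a single vertex. -/
def IsChainUpTo (G : SimpleGraph V) (v : V) (k : ℕ) (f : ℕ → V) : Prop :=
  f 0 = v ∧
  (∀ i j, i ≤ k → j ≤ k → f i = f j → i = j) ∧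
  (zfStep G)^[k] {v} = {x | ∃ i ≤ k, f i = x} ∧
  (∀ i j, i ≤ k → j ≤ k → (G.Adj (f i) (f j) ↔ i + 1 = j ∨ j + 1 = i)) ∧
  (∀ i, i < k → G.neighborSet (f i) ⊆ {x | ∃ j ≤ k, f j = x})

lemma chain_extend {G : SimpleGraph V} {v : V} {k : ℕ} {f : ℕ → V}
    (hc : IsChainUpTo G v k f)
    (hstuck : zfStep G ((zfStep G)^[k] {v}) ≠ (zfStep G)^[k] {v}) :
    ∃ f', IsChainUpTo G v (k + 1) f' := by
  obtain ⟨h0, hinj, hS, hadj, hnbr⟩ := hc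
  set S : Set V := (zfStep G)^[k] {v} with hSdef
  -- find a newly forced vertex u
  have hu : ∃ u, u ∈ zfStep G S ∧ u ∉ S := by
    by_contra h
    push_neg at h
    exact hstuck (Set.Subset.antisymm h (subset_zfStep G S))
  obtain ⟨u, huin, huout⟩ := hu
  have honly : ∀ w, w ∈ zfStep G S → w ∉ S → G.neighborSet (f k) \ S = {w} := by
    intro w hwin hwout
    rcases hwin with h | h
    · exact absurd h hwout
    · obtain ⟨x, hxS, hx⟩ := h
      rw [hS] at hxS
      obtain ⟨i, hik, rfl⟩ := hxS
      rcases eq_or_lt_of_le hik with rfl | hik'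
      · exact hx
      · exfalso
        have hwN : w ∈ G.neighborSet (f i) \ S := hx ▸ rfl
        have : w ∈ S := by
          rw [hS]
          exact hnbr i hik' hwN.1
        exact hwout this
  have hforce : G.neighborSet (f k) \ S = {u} := honly u huin huout
  have hustep : zfStep G S = S ∪ {u} := by
    apply Set.Subset.antisymm
    · intro w hw
      by_cases hwS : w ∈ S
      · exact Or.inl hwS
      · have := honly w hw hwS
        right
        have : ({u} : Set V) = {w} := hforce ▸ this
        simp only [Set.singleton_eq_singleton_iff] at this
        simp [this]
    · rintro w (hw | hw)
      · exact subset_zfStep G S hw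
      · right
        refine ⟨f k, ?_, ?_⟩
        · rw [hS]; exact ⟨k, le_refl k, rfl⟩
        · simp only [Set.mem_singleton_iff] at hw
          rw [hw]; exact hforce
  have hune : ∀ j, j ≤ k → f j ≠ u := by
    intro j hj h
    apply huout
    rw [hS]
    exact ⟨j, hj, h⟩
  refine ⟨fun j => if j ≤ k then f j else u, ?_, ?_, ?_, ?_, ?_⟩
  · simp [h0]
  · intro i j hi hj hij
    by_cases hik : i ≤ k <;> by_cases hjk : j ≤ k <;> simp [hik, hjk] at hij
    · exact hinj i j hik hjk hij
    · exact absurd hij (hune i hik)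
    · exact absurd hij.symm (hune j hjk)
    · omega
  · rw [Function.iterate_succ_apply', ← hSdef, hustep]
    ext x
    constructor
    · rintro (hx | hx)
      · rw [hS] at hx
        obtain ⟨i, hik, rfl⟩ := hx
        exact ⟨i, by omega, by simp [hik]⟩
      · simp only [Set.mem_singleton_iff] at hx
        exact ⟨k + 1, le_refl _, by simp [hx]⟩
    · rintro ⟨i, hik, rfl⟩
      by_cases h : i ≤ k
      · left; rw [hS]; exact ⟨i, h, by simp [h]⟩
      · right; simp [h]
  · intro i j hi hj
    have husnbr : u ∈ G.neighborSet (f k) := (hforce ▸ rfl : u ∈ G.neighborSet (f k) \ S).1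
    have hnotadj : ∀ i, i < k → ¬ G.Adj (f i) u := by
      intro i hik hA
      apply huout
      rw [hS]
      exact hnbr i hik hA
    by_cases hik : i ≤ k <;> by_cases hjk : j ≤ k <;> simp only [hik, hjk, if_pos, if_neg, if_true, if_false]
    · rw [hadj i j hik hjk]
    · -- j = k + 1
      have hj' : j = k + 1 := by omega
      subst hj'
      rcases eq_or_lt_of_le hik with rfl | hik'
      · constructor
        · intro _; omega
        · intro _; exact husnbr
      · constructor
        · intro h; exact absurd h (hnotadj i hik')
        · intro h; omega
    · have hi' : i = k + 1 := by omega
      subst hi'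
      rcases eq_or_lt_of_le hjk with rfl | hjk'
      · constructor
        · intro _; omega
        · intro _; exact husnbr.symm
      · constructor
        · intro h; exact absurd h.symm (hnotadj j hjk')
        · intro h; omega
    · have : i = k + 1 ∧ j = k + 1 := by omega
      obtain ⟨rfl, rfl⟩ := this
      simp only [SimpleGraph.irrefl]
      constructor
      · intro h; exact h.elim
      · omega
  · intro i hi x hx
    by_cases hik : i ≤ k
    · simp only [hik, if_pos] at hx
      by_cases hik' : i < k
      · have : x ∈ {x | ∃ j ≤ k, f j = x} := hnbr i hik' hx
        obtain ⟨j, hj, rfl⟩ := this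
        exact ⟨j, by omega, by simp [hj]⟩
      · have heq : i = k := by omega
        rw [heq] at hx
        by_cases hxS : x ∈ S
        · rw [hS] at hxS
          obtain ⟨j, hj, rfl⟩ := hxS
          exact ⟨j, by omega, by simp [hj]⟩
        · have : x ∈ G.neighborSet (f k) \ S := ⟨hx, hxS⟩
          rw [hforce] at this
          simp only [Set.mem_singleton_iff] at this
          exact ⟨k + 1, le_refl _, by simp [this]⟩
    · omega

lemma chain_exists {G : SimpleGraph V} {v : V} (hF : IsForcingSet G {v}) :
    ∀ k, (∀ j, j < k → (zfStep G)^[j] {v} ≠ Set.univ) → ∃ f, IsChainUpTo G v k f := by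
  intro k
  induction k with
  | zero =>
    intro _
    refine ⟨fun _ => v, rfl, ?_, ?_, ?_, ?_⟩
    · intro i j hi hj _; omega
    · ext x
      simp only [Function.iterate_zero, id_eq, Set.mem_singleton_iff, Set.mem_setOf_eq]
      constructor
      · rintro rfl; exact ⟨0, le_refl _, rfl⟩
      · rintro ⟨i, _, rfl⟩; rfl
    · intro i j hi hj
      interval_cases i
      interval_cases j
      simp
    · intro i hi; omega
  | succ k ih =>
    intro h
    obtain ⟨f, hf⟩ := ih (fun j hj => h j (by omega))
    exact chain_extend hf (not_stuck hF (h k (by omega)))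

lemma forward_direction {V : Type*} [Fintype V] {G : SimpleGraph V} {v : V}
    (hF : IsForcingSet G {v}) (n : ℕ) (hcard : Fintype.card V = n) (hn : 2 ≤ n) :
    Nonempty (G ≃g SimpleGraph.pathGraph n) := by
  classical
  have hncard_univ : (Set.univ : Set V).ncard = n := by
    rw [Set.ncard_univ, Nat.card_eq_fintype_card, hcard]
  have hne0 : ({v} : Set V) ≠ Set.univ := by
    intro h
    have : ({v} : Set V).ncard = 1 := Set.ncard_singleton v
    rw [h, hncard_univ] at this
    omega
  have hFne : ∃ m, (zfStep G)^[m] {v} = Set.univ := hF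
  set m := Nat.find hFne with hmdef
  have hm : (zfStep G)^[m] {v} = Set.univ := Nat.find_spec hFne
  have hmin : ∀ j, j < m → (zfStep G)^[j] {v} ≠ Set.univ := fun j hj => Nat.find_min hFne hj
  obtain ⟨f, h0, hinj, hS, hadj, _⟩ := chain_exists hF m hmin
  have huniv : {x | ∃ i ≤ m, f i = x} = Set.univ := hS ▸ hm
  -- compute n = m + 1
  have himg : {x | ∃ i ≤ m, f i = x} = ↑((Finset.range (m + 1)).image f) := by
    ext x
    simp [Nat.lt_succ_iff]
  have hcardimg : ((Finset.range (m + 1)).image f).card = m + 1 := by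
    rw [Finset.card_image_of_injOn, Finset.card_range]
    intro i hi j hj hij
    simp only [Finset.mem_coe, Finset.mem_range, Nat.lt_succ_iff] at hi hj
    exact hinj i j hi hj hij
  have hnm : n = m + 1 := by
    have := hncard_univ
    rw [← huniv, himg, Set.ncard_coe_finset, hcardimg] at this
    omega
  -- build the isomorphism
  have hφbij : Function.Bijective (fun i : Fin n => f i.val) := by
    constructor
    · intro i j hij
      apply Fin.ext
      have hi := i.isLt
      have hj := j.isLt
      exact hinj i.val j.val (by omega) (by omega) hij
    · intro x
      have : x ∈ {x | ∃ i ≤ m, f i = x} := huniv ▸ Set.mem_univ x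
      obtain ⟨i, hi, rfl⟩ := this
      exact ⟨⟨i, by omega⟩, rfl⟩
  let e : Fin n ≃ V := Equiv.ofBijective _ hφbij
  have hiso : SimpleGraph.pathGraph n ≃g G := by
    refine ⟨e, ?_⟩
    intro a b
    show G.Adj (f a.val) (f b.val) ↔ (SimpleGraph.pathGraph n).Adj a b
    have ha := a.isLt
    have hb := b.isLt
    rw [hadj a.val b.val (by omega) (by omega), SimpleGraph.pathGraph_adj]
  exact ⟨hiso.symm⟩

lemma path_has_forcing_singleton {V : Type*} [Fintype V] {G : SimpleGraph V} {n : ℕ}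
    (hn : 1 ≤ n) (e : G ≃g SimpleGraph.pathGraph n) :
    ∃ v : V, IsForcingSet G {v} := by
  have hn0 : 0 < n := hn
  set w : Fin n → V := fun i => e.symm i with hwdef
  have hwinj : Function.Injective w := e.symm.toEquiv.injective
  have hwadj : ∀ i j : Fin n, G.Adj (w i) (w j) ↔ (i.val + 1 = j.val ∨ j.val + 1 = i.val) := by
    intro i j
    rw [show G.Adj (w i) (w j) ↔ (SimpleGraph.pathGraph n).Adj i j from e.symm.map_adj_iff,
      SimpleGraph.pathGraph_adj]
  have hsurj : ∀ x : V, x = w (e x) := fun x => (e.symm_apply_apply x).symm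
  have key : ∀ k, k < n →
      (zfStep G)^[k] {w ⟨0, hn0⟩} = {x | ∃ i : Fin n, i.val ≤ k ∧ w i = x} := by
    intro k
    induction k with
    | zero =>
      intro _
      ext x
      simp only [Function.iterate_zero, id_eq, Set.mem_singleton_iff, Set.mem_setOf_eq]
      constructor
      · rintro rfl; exact ⟨⟨0, hn0⟩, le_refl _, rfl⟩
      · rintro ⟨i, hi, rfl⟩
        congr 1
        exact Fin.ext (by simp only [Fin.val_mk]; omega)
    | succ k ih =>
      intro hk1
      have hk : k < n := by omega
      rw [Function.iterate_succ_apply', ih hk]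
      set S : Set V := {x | ∃ i : Fin n, i.val ≤ k ∧ w i = x} with hSdef
      apply Set.Subset.antisymm
      · rintro x (hx | ⟨y, hyS, hy⟩)
        · obtain ⟨i, hi, rfl⟩ := hx
          exact ⟨i, by omega, rfl⟩
        · obtain ⟨i, hi, rfl⟩ := hyS
          have hxmem : x ∈ G.neighborSet (w i) \ S := hy ▸ rfl
          have hadjx : G.Adj (w i) x := hxmem.1
          have hxS : x ∉ S := hxmem.2
          rw [hsurj x, hwadj] at hadjx
          have hgt : ¬ ((e x).val ≤ k) := fun h => hxS ⟨e x, h, (hsurj x).symm⟩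
          rcases hadjx with h | h
          · exact ⟨e x, by omega, (hsurj x).symm⟩
          · omega
      · rintro x ⟨j, hj, rfl⟩
        by_cases hjk : j.val ≤ k
        · exact Or.inl ⟨j, hjk, rfl⟩
        · have hjval : j.val = k + 1 := by omega
          right
          refine ⟨w ⟨k, hk⟩, ⟨⟨k, hk⟩, le_refl _, rfl⟩, ?_⟩
          ext y
          simp only [Set.mem_diff, Set.mem_singleton_iff]
          constructor
          · rintro ⟨hyN, hyS⟩
            have hadjy : G.Adj (w ⟨k, hk⟩) y := hyN
            rw [hsurj y, hwadj] at hadjy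
            have hgt : ¬ ((e y).val ≤ k) := fun h => hyS ⟨e y, h, (hsurj y).symm⟩
            simp only at hadjy
            have : (e y).val = j.val := by omega
            rw [hsurj y]
            congr 1
            exact Fin.ext this
          · rintro rfl
            constructor
            · show G.Adj _ _
              rw [hwadj]
              left
              simp [hjval]
            · rintro ⟨i, hi, hwi⟩
              have := hwinj hwi
              subst this
              omega
  refine ⟨w ⟨0, hn0⟩, n - 1, ?_⟩
  rw [key (n - 1) (by omega)]
  ext x
  simp only [Set.mem_setOf_eq, Set.mem_univ, iff_true]
  exact ⟨e x, by omega, (hsurj x).symm⟩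

lemma empty_not_forcing {V : Type*} [Nonempty V] (G : SimpleGraph V) :
    ¬ IsForcingSet G (∅ : Set V) := by
  rintro ⟨m, hm⟩
  have hfix : zfStep G (∅ : Set V) = ∅ := by
    simp [zfStep]
  rw [Function.iterate_fixed hfix] at hm
  exact (Set.empty_ne_univ : (∅ : Set V) ≠ Set.univ) hm

/-- A connected graph of order `n ≥ 2` has forcing number `1` if and only if it is
isomorphic to the path `P_n`. -/
theorem forcingNumber_eq_one_iff_path {V : Type*} [Fintype V]
    (G : SimpleGraph V) (hG : G.Connected) (n : ℕ) (hcard : Fintype.card V = n)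
    (hn : 2 ≤ n) :
    forcingNumber G = 1 ↔ Nonempty (G ≃g SimpleGraph.pathGraph n) := by
  constructor
  · intro h
    have hne : (Set.ncard '' {S : Set V | IsForcingSet G S}).Nonempty := by
      by_contra hc
      rw [Set.not_nonempty_iff_eq_empty] at hc
      rw [forcingNumber, hc, Nat.sInf_empty] at h
      omega
    have hmem : 1 ∈ Set.ncard '' {S : Set V | IsForcingSet G S} := h ▸ Nat.sInf_mem hne
    obtain ⟨S, hSF, hScard⟩ := hmem
    obtain ⟨v, rfl⟩ := Set.ncard_eq_one.mp hScard
    exact forward_direction hSF n hcard hn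
  · rintro ⟨e⟩
    obtain ⟨v, hv⟩ := path_has_forcing_singleton (by omega) e
    have hmem : 1 ∈ Set.ncard '' {S : Set V | IsForcingSet G S} :=
      ⟨{v}, hv, Set.ncard_singleton v⟩
    have hle : forcingNumber G ≤ 1 := Nat.sInf_le hmem
    have hnempty : Nonempty V := by
      rw [← Fintype.card_pos_iff, hcard]; omega
    have hne0 : forcingNumber G ≠ 0 := by
      intro h0
      have hnonempty : (Set.ncard '' {S : Set V | IsForcingSet G S}).Nonempty := ⟨1, hmem⟩
      have h0mem : 0 ∈ Set.ncard '' {S : Set V | IsForcingSet G S} := h0 ▸ Nat.sInf_mem hnonempty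
      obtain ⟨S, hSF, hScard⟩ := h0mem
      have hSfin : S.Finite := Set.toFinite S
      have hSempty : S = ∅ := (Set.ncard_eq_zero hSfin).mp hScard
      rw [hSempty] at hSF
      exact empty_not_forcing G hSF
    omega
end

section
/- If G is a connected graph of order at least 3 that is not a path, then the power domination number satisfies γ_P(G) ≤ F_c(G)/2. -/
open SimpleGraph

variable {V : Type*}

/-- Closed neighborhood of a set of vertices. -/
def closedNbhd (G : SimpleGraph V) (S : Set V) : Set V :=
  {w | w ∈ S ∨ ∃ v ∈ S, G.Adj v w}

/-- The monitored sets of the power domination process: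
`P⁰(S) = N[S]`, and `P^{i+1}(S)` adds every vertex that is the unique
unmonitored neighbor of some monitored vertex. -/
def monitored (G : SimpleGraph V) (S : Set V) : ℕ → Set V
  | 0 => closedNbhd G S
  | (i + 1) => zfStep G (monitored G S i)

/-- `S` is a power dominating set if the monitoring process reaches all of `V`. -/
def IsPowerDominating (G : SimpleGraph V) (S : Set V) : Prop :=
  ∃ i : ℕ, monitored G S i = Set.univ

/-- The power domination number `γ_P(G)`. -/
noncomputable def powerDomNumber (G : SimpleGraph V) : ℕ :=
  sInf (Set.ncard '' {S : Set V | IsPowerDominating G S})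

lemma zfStep_mono (G : SimpleGraph V) {S T : Set V} (h : S ⊆ T) :
    zfStep G S ⊆ zfStep G T := by
  rintro x (hx | ⟨v, hv, hvx⟩)
  · exact Or.inl (h hx)
  · by_cases hxT : x ∈ T
    · exact Or.inl hxT
    · refine Or.inr ⟨v, h hv, ?_⟩
      have hx' : x ∈ G.neighborSet v \ S := by rw [hvx]; rfl
      ext y
      simp only [Set.mem_diff, Set.mem_singleton_iff]
      constructor
      · intro hy
        have hy' : y ∈ G.neighborSet v \ S := ⟨hy.1, fun hyS => hy.2 (h hyS)⟩
        rw [hvx] at hy'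
        exact hy'
      · rintro rfl
        exact ⟨hx'.1, hxT⟩

lemma zfStep_iter_mono (G : SimpleGraph V) {S T : Set V} (h : S ⊆ T) (n : ℕ) :
    (zfStep G)^[n] S ⊆ (zfStep G)^[n] T := by
  induction n with
  | zero => exact h
  | succ n ih =>
    rw [Function.iterate_succ_apply', Function.iterate_succ_apply']
    exact zfStep_mono G ih

lemma monitored_eq_iterate (G : SimpleGraph V) (S : Set V) (n : ℕ) :
    monitored G S n = (zfStep G)^[n] (closedNbhd G S) := by
  induction n with
  | zero => rfl
  | succ n ih =>
    rw [Function.iterate_succ_apply']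
    show zfStep G (monitored G S n) = _
    rw [ih]

/-! ### Single-vertex forcing sets give paths -/

/-- The invariant for single-vertex forcing: the colored set is a path. -/
def PathInv (G : SimpleGraph V) (v : V) (C : Set V) : Prop :=
  ∃ (m : ℕ) (w : ℕ → V), w 0 = v ∧ Set.InjOn w (Set.Iic m) ∧ C = w '' Set.Iic m ∧
    (∀ j k, j ≤ m → k ≤ m → (G.Adj (w j) (w k) ↔ j + 1 = k ∨ k + 1 = j)) ∧
    (∀ j, j < m → G.neighborSet (w j) ⊆ C)

lemma pathInv_base (G : SimpleGraph V) (v : V) : PathInv G v {v} := by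
  refine ⟨0, fun _ => v, rfl, ?_, ?_, ?_, ?_⟩
  · intro i hi j hj _
    simp only [Set.mem_Iic, Nat.le_zero] at hi hj
    omega
  · ext u; simp
  · intro j k hj hk
    simp only [Nat.le_zero] at hj hk
    subst hj; subst hk
    simp
  · intro j hj; omega

lemma pathInv_step (G : SimpleGraph V) (v : V) (C : Set V) (h : PathInv G v C) :
    PathInv G v (zfStep G C) := by
  by_cases hfix : zfStep G C = C
  · rwa [hfix]
  obtain ⟨m, w, hw0, hinj, hC, hadj, hnbr⟩ := h
  -- find the forced vertex x
  have hex : ∃ x, x ∈ zfStep G C ∧ x ∉ C := by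
    by_contra hcon
    push_neg at hcon
    exact hfix (Set.Subset.antisymm hcon Set.subset_union_left)
  obtain ⟨x, hx1, hxC⟩ := hex
  rcases hx1 with hx1 | ⟨v', hv'C, hv'x⟩
  · exact absurd hx1 hxC
  -- v' = w m
  obtain ⟨j0, hj0, hj0v⟩ : ∃ j0 ≤ m, w j0 = v' := by
    rw [hC] at hv'C
    obtain ⟨j0, hj0, hjv⟩ := hv'C
    exact ⟨j0, hj0, hjv⟩
  have hjm : j0 = m := by
    by_contra hne
    have hjlt : j0 < m := lt_of_le_of_ne hj0 hne
    have hxin : x ∈ G.neighborSet (w j0) \ C := by rw [hj0v, hv'x]; rfl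
    exact hxC (hnbr j0 hjlt hxin.1)
  have hvm : G.neighborSet (w m) \ C = {x} := by
    rw [← hjm] at *
    rw [hj0v]; exact hv'x
  have hwmC : w m ∈ C := by rw [hC]; exact ⟨m, Set.mem_Iic.mpr le_rfl, rfl⟩
  -- zfStep G C = C ∪ {x}
  have hstep : zfStep G C = C ∪ {x} := by
    apply Set.Subset.antisymm
    · rintro y (hy | ⟨v'', hv''C, hv''y⟩)
      · exact Or.inl hy
      · obtain ⟨k, hk, hkv⟩ : ∃ k ≤ m, w k = v'' := by
          rw [hC] at hv''C
          obtain ⟨k, hk, hkv⟩ := hv''C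
          exact ⟨k, hk, hkv⟩
        have hyin : y ∈ G.neighborSet (w k) \ C := by rw [hkv, hv''y]; rfl
        have hkm : k = m := by
          by_contra hne
          exact hyin.2 (hnbr k (lt_of_le_of_ne hk hne) hyin.1)
        rw [hkm] at hkv
        rw [← hkv, hvm, Set.singleton_eq_singleton_iff] at hv''y
        exact Or.inr (by simp [← hv''y])
    · rintro y (hy | hy)
      · exact Or.inl hy
      · rcases hy with rfl
        exact Or.inr ⟨w m, hwmC, hvm⟩
  rw [hstep]
  -- build the new witnesses
  have hxmem : x ∈ G.neighborSet (w m) \ C := by rw [hvm]; rfl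
  have hadjx : ∀ j ≤ m, (G.Adj (w j) x ↔ j = m) := by
    intro j hj
    constructor
    · intro hA
      by_contra hne
      exact hxC (hnbr j (lt_of_le_of_ne hj hne) hA)
    · rintro rfl
      exact hxmem.1
  have hwC : ∀ i ≤ m, w i ∈ C := by
    intro i hi
    rw [hC]; exact ⟨i, Set.mem_Iic.mpr hi, rfl⟩
  classical
  refine ⟨m + 1, Function.update w (m + 1) x, ?_, ?_, ?_, ?_, ?_⟩
  · rw [Function.update_of_ne (by omega) _ _]
    exact hw0
  · intro i1 h1 i2 h2 heq
    simp only [Set.mem_Iic] at h1 h2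
    by_cases e1 : i1 = m + 1 <;> by_cases e2 : i2 = m + 1
    · omega
    · exfalso
      rw [e1, Function.update_self, Function.update_of_ne e2] at heq
      exact hxC (heq ▸ hwC i2 (by omega))
    · exfalso
      rw [e2, Function.update_self, Function.update_of_ne e1] at heq
      exact hxC (heq.symm ▸ hwC i1 (by omega))
    · rw [Function.update_of_ne e1, Function.update_of_ne e2] at heq
      exact hinj (Set.mem_Iic.mpr (by omega)) (Set.mem_Iic.mpr (by omega)) heq
  · ext u
    constructor
    swap
    · rintro ⟨i, hi, hiu⟩
      simp only [Set.mem_Iic] at hi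
      by_cases e : i = m + 1
      · right
        rw [e, Function.update_self] at hiu
        exact hiu.symm
      · left
        rw [Function.update_of_ne e] at hiu
        rw [hC]
        exact ⟨i, Set.mem_Iic.mpr (by omega), hiu⟩
    · rintro (hu | hu)
      · rw [hC] at hu
        obtain ⟨i, hi, hiu⟩ := hu
        simp only [Set.mem_Iic] at hi
        exact ⟨i, Set.mem_Iic.mpr (by omega),
          by rw [Function.update_of_ne (by omega : i ≠ m + 1)]; exact hiu⟩
      · rcases hu with rfl
        exact ⟨m + 1, Set.mem_Iic.mpr le_rfl, Function.update_self _ _ _⟩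
  · intro j k hj hk
    by_cases e1 : j = m + 1 <;> by_cases e2 : k = m + 1
    · rw [e1, e2, Function.update_self]
      constructor
      · intro hA; exact absurd hA (G.irrefl)
      · omega
    · rw [e1, Function.update_self, Function.update_of_ne e2]
      rw [show G.Adj x (w k) ↔ G.Adj (w k) x from ⟨Adj.symm, Adj.symm⟩]
      rw [hadjx k (by omega)]
      omega
    · rw [e2, Function.update_self, Function.update_of_ne e1]
      rw [hadjx j (by omega)]
      omega
    · rw [Function.update_of_ne e1, Function.update_of_ne e2]
      rw [hadj j k (by omega) (by omega)]
  · intro j hj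
    rw [Function.update_of_ne (by omega : j ≠ m + 1)]
    by_cases hjlt : j < m
    · exact (hnbr j hjlt).trans Set.subset_union_left
    · have hjq : j = m := by omega
      subst hjq
      intro y hy
      by_cases hyC : y ∈ C
      · exact Or.inl hyC
      · have hmem : y ∈ G.neighborSet (w j) \ C := ⟨hy, hyC⟩
        rw [hvm] at hmem
        exact Or.inr hmem

lemma forcing_singleton_path [Fintype V] (G : SimpleGraph V) (v : V)
    (n : ℕ) (hforce : (zfStep G)^[n] {v} = Set.univ) :
    ∃ m : ℕ, Nonempty (G ≃g SimpleGraph.pathGraph m) := by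
  have hinv : ∀ i : ℕ, PathInv G v ((zfStep G)^[i] {v}) := by
    intro i
    induction i with
    | zero => exact pathInv_base G v
    | succ i ih =>
      rw [Function.iterate_succ_apply']
      exact pathInv_step G v _ ih
  have h := hinv n
  rw [hforce] at h
  obtain ⟨m, w, hw0, hinj, hC, hadj, _⟩ := h
  refine ⟨m + 1, ⟨?_⟩⟩
  have hbij : Function.Bijective (fun i : Fin (m + 1) => w i.val) := by
    constructor
    · intro i1 i2 heq
      exact Fin.ext (hinj (Set.mem_Iic.mpr (by omega)) (Set.mem_Iic.mpr (by omega)) heq)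
    · intro u
      have hu : u ∈ w '' Set.Iic m := hC ▸ Set.mem_univ u
      obtain ⟨i, hi, hiu⟩ := hu
      simp only [Set.mem_Iic] at hi
      exact ⟨⟨i, by omega⟩, hiu⟩
  refine RelIso.symm ⟨Equiv.ofBijective _ hbij, ?_⟩
  intro a b
  show G.Adj (w a.val) (w b.val) ↔ (SimpleGraph.pathGraph (m + 1)).Adj a b
  rw [hadj a.val b.val (by omega) (by omega), pathGraph_adj]

/-! ### A small dominating set via distance parity -/

lemma exists_adj_dist_pred {W : Type*} (H : SimpleGraph W) (hH : H.Connected)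
    {r u : W} (hne : u ≠ r) : ∃ y, H.Adj y u ∧ H.dist r y + 1 = H.dist r u := by
  have key : ∀ {a b : W} (p : H.Walk a b),
      b = a ∨ ∃ y, H.Adj y b ∧ H.dist a y + 1 ≤ p.length := by
    intro a b p
    induction p with
    | nil => exact Or.inl rfl
    | @cons a z b h q ih =>
      rcases ih with rfl | ⟨y, hy, hyd⟩
      · refine Or.inr ⟨a, h, ?_⟩
        simp [H.dist_self]
      · refine Or.inr ⟨y, hy, ?_⟩
        have h1 : H.dist a y ≤ H.dist a z + H.dist z y := hH.dist_triangle
        have h2 : H.dist a z ≤ 1 := by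
          have : H.dist a z = 1 := dist_eq_one_iff_adj.mpr h
          omega
        simp only [SimpleGraph.Walk.length_cons]
        omega
  obtain ⟨p, hp⟩ := (hH r u).exists_walk_length_eq_dist
  rcases key p with rfl | ⟨y, hy, hyd⟩
  · exact absurd rfl hne
  · refine ⟨y, hy, ?_⟩
    rw [hp] at hyd
    have h2 : H.dist r u ≤ H.dist r y + 1 := by
      have h3 : H.dist r u ≤ H.dist r y + H.dist y u := hH.dist_triangle
      have h4 : H.dist y u = 1 := dist_eq_one_iff_adj.mpr hy
      omega
    omega

lemma exists_small_domset {W : Type*} [Fintype W] (H : SimpleGraph W) (hH : H.Connected)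
    (h2 : 2 ≤ Fintype.card W) :
    ∃ D : Set W, (∀ w, w ∈ D ∨ ∃ d ∈ D, H.Adj d w) ∧ 2 * D.ncard ≤ Fintype.card W := by
  have hnon : Nonempty W := Fintype.card_pos_iff.mp (by omega)
  obtain ⟨r⟩ := hnon
  set E : Set W := {u | Even (H.dist r u)} with hE
  have hEdom : ∀ w, w ∈ E ∨ ∃ d ∈ E, H.Adj d w := by
    intro w
    by_cases hw : Even (H.dist r w)
    · exact Or.inl hw
    · have hwr : w ≠ r := by rintro rfl; simp [H.dist_self] at hw
      obtain ⟨y, hy, hyd⟩ := exists_adj_dist_pred H hH hwr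
      refine Or.inr ⟨y, ?_, hy⟩
      have ho : Odd (H.dist r w) := Nat.not_even_iff_odd.mp hw
      show Even (H.dist r y)
      rcases ho with ⟨k, hk⟩
      exact ⟨k, by omega⟩
  have hOdom : ∀ w, w ∈ Eᶜ ∨ ∃ d ∈ Eᶜ, H.Adj d w := by
    intro w
    by_cases hw : Even (H.dist r w)
    · by_cases hwr : w = r
      · subst hwr
        obtain ⟨u, hu⟩ : ∃ u : W, u ≠ w := Fintype.exists_ne_of_one_lt_card (by omega) w
        obtain ⟨p, hp⟩ := (hH w u).exists_walk_length_eq_dist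
        have hpos : 0 < p.length := by
          rw [hp]; exact hH.pos_dist_of_ne (Ne.symm hu)
        cases p with
        | nil => simp at hpos
        | @cons a z b hadj q =>
          refine Or.inr ⟨z, ?_, hadj.symm⟩
          have h1 : H.dist w z = 1 := dist_eq_one_iff_adj.mpr hadj
          show ¬ Even (H.dist w z)
          simp [h1]
      · obtain ⟨y, hy, hyd⟩ := exists_adj_dist_pred H hH hwr
        refine Or.inr ⟨y, ?_, hy⟩
        show ¬ Even (H.dist r y)
        intro ⟨k, hk⟩
        rcases hw with ⟨j, hj⟩
        omega
    · exact Or.inl hw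
  have hsum : E.ncard + Eᶜ.ncard = Fintype.card W := by
    have := Set.ncard_add_ncard_compl E
    simpa using this
  rcases le_or_gt E.ncard Eᶜ.ncard with h | h
  · exact ⟨E, hEdom, by omega⟩
  · exact ⟨Eᶜ, hOdom, by omega⟩

/-- If `G` is a connected graph of order at least `3` that is not a path, then
`γ_P(G) ≤ F_c(G)/2`, i.e. `2 γ_P(G) ≤ F_c(G)`. -/
theorem two_mul_powerDomNumber_le_connForcingNumber {V : Type*} [Fintype V]
    (G : SimpleGraph V) (hG : G.Connected) (hcard : 3 ≤ Fintype.card V)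
    (hpath : ∀ m : ℕ, IsEmpty (G ≃g SimpleGraph.pathGraph m)) :
    2 * powerDomNumber G ≤ connForcingNumber G := by
  classical
  -- the set of cardinalities of connected forcing sets is nonempty
  have huniv : IsConnForcingSet G (Set.univ : Set V) := by
    refine ⟨⟨0, rfl⟩, ?_⟩
    exact (SimpleGraph.Iso.connected_iff (induceUnivIso G)).mpr hG
  have hnonempty : (Set.ncard '' {S : Set V | IsConnForcingSet G S}).Nonempty :=
    ⟨(Set.univ : Set V).ncard, ⟨Set.univ, huniv, rfl⟩⟩
  obtain ⟨S, hS, hSk⟩ := Nat.sInf_mem hnonempty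
  rw [Set.mem_setOf_eq] at hS
  -- S is a minimum connected forcing set; its cardinality is connForcingNumber G
  have hkdef : S.ncard = connForcingNumber G := hSk
  have hSne : S.Nonempty := by
    have : Nonempty ↥S := hS.2.nonempty
    exact Set.nonempty_coe_sort.mp this
  have hk1 : 1 ≤ S.ncard := (Set.ncard_pos S.toFinite).mpr hSne
  by_cases hk2 : 2 ≤ S.ncard
  · -- main case: find a small dominating set of the induced graph
    haveI : Fintype ↥S := S.toFinite.fintype
    have hcardS : Fintype.card ↥S = S.ncard := by
      rw [← Nat.card_coe_set_eq, Nat.card_eq_fintype_card]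
    obtain ⟨D, hdom, hDcard⟩ :=
      exists_small_domset (G.induce S) hS.2 (by omega)
    set D' : Set V := Subtype.val '' D with hD'
    have hD'card : D'.ncard = D.ncard :=
      Set.ncard_image_of_injective D Subtype.val_injective
    -- S is contained in the closed neighborhood of D'
    have hSsub : S ⊆ closedNbhd G D' := by
      intro s hs
      rcases hdom ⟨s, hs⟩ with hmem | ⟨d, hd, hadj⟩
      · exact Or.inl ⟨⟨s, hs⟩, hmem, rfl⟩
      · exact Or.inr ⟨d.val, ⟨d, hd, rfl⟩, hadj⟩
    -- D' is power dominating
    obtain ⟨n, hn⟩ := hS.1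
    have hPD : IsPowerDominating G D' := by
      refine ⟨n, ?_⟩
      rw [monitored_eq_iterate]
      apply Set.eq_univ_of_univ_subset
      calc Set.univ = (zfStep G)^[n] S := hn.symm
        _ ⊆ (zfStep G)^[n] (closedNbhd G D') := zfStep_iter_mono G hSsub n
    have hle : powerDomNumber G ≤ D'.ncard :=
      Nat.sInf_le ⟨D', hPD, rfl⟩
    omega
  · -- S is a singleton: G would be a path, contradiction
    have hone : S.ncard = 1 := by omega
    obtain ⟨v, rfl⟩ := Set.ncard_eq_one.mp hone
    obtain ⟨n, hn⟩ := hS.1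
    obtain ⟨m, ⟨iso⟩⟩ := forcing_singleton_path G v n hn
    exact ((hpath m).false iso).elim
end

section
/- Let G be a connected graph of order n ≥ 2. Then F_c(G) = n − 1 if and only if G is a complete graph K_n with n ≥ 2, or a star K_{1,n−1} with n ≥ 4. -/
open SimpleGraph

variable {V : Type*}

/-- The star `K_{1,n-1}` on `n` vertices: vertex `0` is adjacent to all others. -/
def starGraph (n : ℕ) : SimpleGraph (Fin n) :=
  SimpleGraph.fromRel (fun v _ => (v : ℕ) = 0)





/-- Transfer a walk whose support lies in `S` to the induced subgraph. -/
lemma reachable_induce_of_walk {G : SimpleGraph V} {S : Set V} {a b : V}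
    (p : G.Walk a b) (hp : ∀ x ∈ p.support, x ∈ S) :
    (G.induce S).Reachable ⟨a, hp a p.start_mem_support⟩ ⟨b, hp b p.end_mem_support⟩ := by
  induction p with
  | nil => exact Reachable.refl _
  | @cons u v w h q ih =>
      have hv : v ∈ S := hp v (by simp)
      have hu : u ∈ S := hp u (by simp)
      have hq : ∀ x ∈ q.support, x ∈ S := fun x hx => hp x (by simp [hx])
      have h1 : (G.induce S).Adj ⟨u, hu⟩ ⟨v, hv⟩ := h
      exact (h1.reachable).trans (ih hq)

/-- Removing a vertex farthest from `x` keeps the graph connected. -/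
lemma core_remove_farthest {W : Type*} (H : SimpleGraph W) (hH : H.Connected)
    (x u : W) (hmax : ∀ y, H.dist x y ≤ H.dist x u) (hne : u ≠ x) :
    (H.induce ({u}ᶜ : Set W)).Connected := by
  classical
  have hxmem : x ∈ ({u}ᶜ : Set W) := by simp [hne.symm]
  have key : ∀ (c : ({u}ᶜ : Set W)), (H.induce ({u}ᶜ : Set W)).Reachable c ⟨x, hxmem⟩ := by
    rintro ⟨c, hc⟩
    obtain ⟨p, hp⟩ := (hH x c).exists_walk_length_eq_dist
    have husup : u ∉ p.support := by
      intro husup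
      have h1 := SimpleGraph.dist_le (p.takeUntil u husup)
      have h2 := SimpleGraph.dist_le (p.dropUntil u husup)
      have h3 : (p.takeUntil u husup).length + (p.dropUntil u husup).length = p.length := by
        rw [← SimpleGraph.Walk.length_append, p.take_spec husup]
      have h5 := hmax c
      have hpos := hH.pos_dist_of_ne hne
      have h6 : H.dist u c = 0 := by omega
      have := (hH u c).dist_eq_zero_iff.mp h6
      exact hc (by simp [← this])
    have hsup : ∀ y ∈ p.support, y ∈ ({u}ᶜ : Set W) := by
      intro y hy
      simp only [Set.mem_compl_iff, Set.mem_singleton_iff]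
      rintro rfl; exact husup hy
    exact (reachable_induce_of_walk p hsup).symm
  rw [connected_iff]
  exact ⟨fun a b => (key a).trans (key b).symm, ⟨⟨x, hxmem⟩⟩⟩







lemma zfStep_univ (G : SimpleGraph V) : zfStep G Set.univ = Set.univ :=
  Set.eq_univ_of_univ_subset (subset_zfStep G _)

lemma exists_adj_of_connected [Fintype V] {G : SimpleGraph V} (hG : G.Connected)
    (h2 : 2 ≤ Fintype.card V) (v : V) : ∃ y, G.Adj v y := by
  obtain ⟨x, hx⟩ := Fintype.exists_ne_of_one_lt_card h2 v
  obtain ⟨p⟩ := hG v x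
  cases p with
  | nil => exact absurd rfl hx.symm
  | cons h q => exact ⟨_, h⟩

lemma induce_connected_of_dominating {G : SimpleGraph V} {S : Set V} {c : V}
    (hc : c ∈ S) (h : ∀ x ∈ S, x ≠ c → G.Adj c x) : (G.induce S).Connected := by
  have key : ∀ a : S, (G.induce S).Reachable a ⟨c, hc⟩ := by
    rintro ⟨a, ha⟩
    by_cases hac : a = c
    · subst hac; exact Reachable.refl _
    · have : (G.induce S).Adj ⟨a, ha⟩ ⟨c, hc⟩ := (h a ha hac).symm
      exact this.reachable
  rw [connected_iff]
  exact ⟨fun a b => (key a).trans (key b).symm, ⟨⟨c, hc⟩⟩⟩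

lemma induce_sdiff_connected {G : SimpleGraph V} {S : Set V} {u : V} (hu : u ∈ S)
    (h : ((G.induce S).induce ({(⟨u, hu⟩ : S)}ᶜ : Set S)).Connected) :
    (G.induce (S \ {u})).Connected := by
  have hmem : ∀ x : ({(⟨u, hu⟩ : S)}ᶜ : Set S), (x.1 : V) ∈ S \ {u} := by
    rintro ⟨⟨v, hv⟩, hx⟩
    simp only [Set.mem_compl_iff, Set.mem_singleton_iff] at hx
    refine ⟨hv, fun hh => hx (Subtype.ext hh)⟩
  let f : (G.induce S).induce ({(⟨u, hu⟩ : S)}ᶜ : Set S) →g G.induce (S \ {u}) :=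
    ⟨fun x => ⟨(x.1 : V), hmem x⟩, fun hab => hab⟩
  have hsurj : Function.Surjective f := by
    rintro ⟨v, hv, hvu⟩
    have hmem2 : (⟨v, hv⟩ : S) ∈ ({(⟨u, hu⟩ : S)}ᶜ : Set S) := by
      simp only [Set.mem_compl_iff, Set.mem_singleton_iff]
      intro hh
      exact hvu (by simpa using congrArg Subtype.val hh)
    exact ⟨⟨⟨v, hv⟩, hmem2⟩, by unfold f; rfl⟩
  exact h.map f hsurj

lemma univ_connForcing [Fintype V] {G : SimpleGraph V} (hG : G.Connected) :
    IsConnForcingSet G Set.univ :=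
  ⟨⟨0, rfl⟩, (induceUnivIso G).connected_iff.mpr hG⟩

lemma connForcingNumber_le [Fintype V] {G : SimpleGraph V} {S : Set V}
    (hS : IsConnForcingSet G S) : connForcingNumber G ≤ S.ncard :=
  Nat.sInf_le ⟨S, hS, rfl⟩

lemma le_connForcingNumber [Fintype V] {G : SimpleGraph V} (hG : G.Connected) {k : ℕ}
    (h : ∀ S : Set V, IsConnForcingSet G S → k ≤ S.ncard) : k ≤ connForcingNumber G := by
  refine le_csInf ⟨Set.univ.ncard, Set.univ, univ_connForcing hG, rfl⟩ ?_
  rintro b ⟨S, hS, rfl⟩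
  exact h S hS

lemma ncard_compl_singleton [Fintype V] (v : V) :
    ({v}ᶜ : Set V).ncard = Fintype.card V - 1 := by
  have h := Set.ncard_add_ncard_compl ({v} : Set V)
  rw [Set.ncard_singleton, Nat.card_eq_fintype_card] at h
  omega

lemma ncard_compl_pair [Fintype V] {u w : V} (h : u ≠ w) :
    ({u, w}ᶜ : Set V).ncard = Fintype.card V - 2 := by
  have h2 := Set.ncard_add_ncard_compl ({u, w} : Set V)
  rw [Set.ncard_pair h, Nat.card_eq_fintype_card] at h2
  omega


-- D1
lemma iso_top_iff [Fintype V] (G : SimpleGraph V) (n : ℕ) (hcard : Fintype.card V = n) :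
    Nonempty (G ≃g (⊤ : SimpleGraph (Fin n))) ↔ ∀ v w : V, v ≠ w → G.Adj v w := by
  constructor
  · rintro ⟨f⟩ v w hvw
    have : (⊤ : SimpleGraph (Fin n)).Adj (f v) (f w) := by
      simp only [top_adj]
      exact fun h => hvw (f.toEquiv.injective (by exact_mod_cast h))
    exact f.map_rel_iff.mp this
  · intro hcomp
    have e := Fintype.equivFinOfCardEq hcard
    refine ⟨⟨e, ?_⟩⟩
    intro v w
    simp only [Equiv.coe_toEmbedding, top_adj, ne_eq, EmbeddingLike.apply_eq_iff_eq]
    constructor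
    · intro h; exact hcomp v w h
    · intro h; exact G.ne_of_adj h

lemma starGraph_adj {n : ℕ} (a b : Fin n) :
    (_root_.starGraph n).Adj a b ↔ a ≠ b ∧ ((a : ℕ) = 0 ∨ (b : ℕ) = 0) := by
  simp [_root_.starGraph, fromRel_adj]

-- D2
lemma iso_star_iff [Fintype V] (G : SimpleGraph V) (n : ℕ) (hcard : Fintype.card V = n)
    (hn : 1 ≤ n) :
    Nonempty (G ≃g _root_.starGraph n) ↔
      ∃ c : V, (∀ v, v ≠ c → G.Adj c v) ∧ (∀ x y, G.Adj x y → x = c ∨ y = c) := by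
  have hzero : ∀ (a : Fin n), (a : ℕ) = 0 ↔ a = ⟨0, hn⟩ := by
    intro a; constructor
    · intro h; exact Fin.ext h
    · intro h; subst h; rfl
  constructor
  · rintro ⟨f⟩
    set c := f.symm ⟨0, hn⟩ with hc
    have hfc : f c = ⟨0, hn⟩ := f.apply_symm_apply _
    refine ⟨c, ?_, ?_⟩
    · intro v hv
      have : (_root_.starGraph n).Adj (f c) (f v) := by
        rw [_root_.starGraph_adj]
        refine ⟨fun h => hv (f.toEquiv.injective h).symm, Or.inl ?_⟩
        rw [hfc]
      exact f.map_rel_iff.mp this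
    · intro x y hxy
      have := f.map_rel_iff.mpr hxy
      rw [_root_.starGraph_adj] at this
      rcases this.2 with h | h
      · left
        have : f x = ⟨0, hn⟩ := (hzero _).mp h
        rw [← hfc] at this
        exact f.toEquiv.injective this
      · right
        have : f y = ⟨0, hn⟩ := (hzero _).mp h
        rw [← hfc] at this
        exact f.toEquiv.injective this
  · rintro ⟨c, hc1, hc2⟩
    have e0 := Fintype.equivFinOfCardEq hcard
    let e := e0.trans (Equiv.swap (e0 c) ⟨0, hn⟩)
    have hec : e c = ⟨0, hn⟩ := by simp [e, Equiv.swap_apply_left]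
    have hinj : ∀ v, e v = ⟨0, hn⟩ ↔ v = c := by
      intro v
      constructor
      · intro h; exact e.injective (by rw [h, hec])
      · intro h; subst h; exact hec
    refine ⟨⟨e, ?_⟩⟩
    intro v w
    show (_root_.starGraph n).Adj (e v) (e w) ↔ G.Adj v w
    rw [_root_.starGraph_adj, hzero, hzero, hinj, hinj]
    constructor
    · rintro ⟨hne, (rfl | rfl)⟩
      · exact hc1 w (fun h => hne (by rw [h]))
      · exact (hc1 v (fun h => hne (by rw [h]))).symm
    · intro h
      exact ⟨fun hh => G.ne_of_adj h (e.injective hh), hc2 v w h⟩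

-- E: complete graphs
lemma connected_of_complete [Fintype V] {G : SimpleGraph V}
    (hcomp : ∀ v w : V, v ≠ w → G.Adj v w) (h2 : 2 ≤ Fintype.card V) : G.Connected := by
  have : Nonempty V := Fintype.card_pos_iff.mp (by omega)
  rw [connected_iff]
  refine ⟨fun a b => ?_, this⟩
  by_cases hab : a = b
  · subst hab; exact Reachable.refl _
  · exact (hcomp a b hab).reachable

lemma connForcing_complete [Fintype V] {G : SimpleGraph V}
    (hcomp : ∀ v w : V, v ≠ w → G.Adj v w) (h2 : 2 ≤ Fintype.card V) :
    connForcingNumber G = Fintype.card V - 1 := by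
  have hne : Nonempty V := Fintype.card_pos_iff.mp (by omega)
  obtain ⟨v₀⟩ := hne
  obtain ⟨y₀, hy₀⟩ := Fintype.exists_ne_of_one_lt_card h2 v₀
  apply le_antisymm
  · -- upper bound
    have hforce : IsForcingSet G ({v₀}ᶜ : Set V) := by
      refine ⟨1, ?_⟩
      rw [Function.iterate_one]
      apply Set.eq_univ_of_forall
      intro x
      by_cases hx : x = v₀
      · subst hx
        right
        refine ⟨y₀, by simp [hy₀], ?_⟩
        ext z
        simp only [Set.mem_diff, mem_neighborSet, Set.mem_compl_iff, Set.mem_singleton_iff,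
          not_not]
        constructor
        · rintro ⟨_, rfl⟩; rfl
        · rintro rfl; exact ⟨hcomp _ _ hy₀, rfl⟩
      · exact Or.inl hx
    have hconn : (G.induce ({v₀}ᶜ : Set V)).Connected := by
      refine induce_connected_of_dominating (c := y₀) (by simp [hy₀]) ?_
      intro x hx hxy
      exact hcomp y₀ x (Ne.symm hxy)
    calc connForcingNumber G ≤ ({v₀}ᶜ : Set V).ncard := connForcingNumber_le ⟨hforce, hconn⟩
    _ = Fintype.card V - 1 := ncard_compl_singleton v₀
  · -- lower bound
    apply le_connForcingNumber (connected_of_complete hcomp h2)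
    intro S hS
    by_contra hlt
    push_neg at hlt
    have hsum := Set.ncard_add_ncard_compl S
    rw [Nat.card_eq_fintype_card] at hsum
    have h2c : 1 < (Sᶜ : Set V).ncard := by omega
    obtain ⟨a, ha, b, hb, hab⟩ := (Set.one_lt_ncard).mp h2c
    have hfix : zfStep G S = S := by
      apply Set.Subset.antisymm _ (subset_zfStep G S)
      rintro w (hw | ⟨v, hv, hset⟩)
      · exact hw
      · exfalso
        have hva : v ≠ a := fun h => ha (h ▸ hv)
        have hvb : v ≠ b := fun h => hb (h ▸ hv)
        have ha' : a ∈ G.neighborSet v \ S := ⟨hcomp v a hva, ha⟩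
        have hb' : b ∈ G.neighborSet v \ S := ⟨hcomp v b hvb, hb⟩
        rw [hset] at ha' hb'
        exact hab (ha'.trans hb'.symm)
    have hiter : ∀ k, (zfStep G)^[k] S = S := by
      intro k
      induction k with
      | zero => rfl
      | succ k ih => rw [Function.iterate_succ_apply', ih, hfix]
    obtain ⟨k, hk⟩ := hS.1
    rw [hiter k] at hk
    exact ha (hk ▸ Set.mem_univ a)

-- F: stars
section Star
variable {G : SimpleGraph V} {c : V}

lemma connected_of_dominating_vertex (hc1 : ∀ v, v ≠ c → G.Adj c v) : G.Connected := by
  rw [connected_iff]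
  refine ⟨fun a b => ?_, ⟨c⟩⟩
  have key : ∀ x : V, G.Reachable x c := by
    intro x
    by_cases hx : x = c
    · subst hx; exact Reachable.refl _
    · exact ((hc1 x hx).symm).reachable
  exact (key a).trans (key b).symm

lemma star_stuck (hc1 : ∀ v, v ≠ c → G.Adj c v)
    (hc2 : ∀ x y, G.Adj x y → x = c ∨ y = c) {a b : V} (hab : a ≠ b) (hac : a ≠ c)
    (hbc : b ≠ c) {S : Set V} (haS : a ∉ S) (hbS : b ∉ S) :
    ∀ k, a ∉ (zfStep G)^[k] S ∧ b ∉ (zfStep G)^[k] S := by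
  intro k
  induction k with
  | zero => exact ⟨haS, hbS⟩
  | succ k ih =>
    obtain ⟨hA, hB⟩ := ih
    rw [Function.iterate_succ_apply']
    set T := (zfStep G)^[k] S with hT
    have main : ∀ x y : V, x ≠ y → x ≠ c → y ≠ c → x ∉ T → y ∉ T → x ∉ zfStep G T := by
      intro x y hxy hxc hyc hxT hyT
      rintro (h | ⟨v, hvT, hset⟩)
      · exact hxT h
      · have hxv : x ∈ G.neighborSet v \ T := hset ▸ rfl
        have hadj : G.Adj v x := hxv.1
        have hvc : v = c := by
          rcases hc2 v x hadj with h | h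
          · exact h
          · exact absurd h hxc
        rw [hvc] at hset
        have hyv : y ∈ G.neighborSet c \ T := ⟨hc1 y hyc, hyT⟩
        rw [hset] at hyv
        exact hxy (hyv.symm)
    exact ⟨main a b hab hac hbc hA hB, main b a hab.symm hbc hac hB hA⟩

lemma connForcing_star (hc1 : ∀ v, v ≠ c → G.Adj c v)
    (hc2 : ∀ x y, G.Adj x y → x = c ∨ y = c) [Fintype V] (h4 : 4 ≤ Fintype.card V) :
    connForcingNumber G = Fintype.card V - 1 := by
  obtain ⟨l, hl⟩ := Fintype.exists_ne_of_one_lt_card (by omega) c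
  apply le_antisymm
  · have hforce : IsForcingSet G ({l}ᶜ : Set V) := by
      refine ⟨1, ?_⟩
      rw [Function.iterate_one]
      apply Set.eq_univ_of_forall
      intro x
      by_cases hx : x = l
      · subst hx
        right
        refine ⟨c, by simp [Ne.symm hl], ?_⟩
        ext z
        simp only [Set.mem_diff, mem_neighborSet, Set.mem_compl_iff, Set.mem_singleton_iff,
          not_not]
        constructor
        · rintro ⟨_, rfl⟩; rfl
        · rintro rfl; exact ⟨hc1 _ hl, rfl⟩
      · exact Or.inl hx
    have hconn : (G.induce ({l}ᶜ : Set V)).Connected := by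
      refine induce_connected_of_dominating (c := c) (by simp [Ne.symm hl]) ?_
      intro x hx hxc
      exact hc1 x hxc
    calc connForcingNumber G ≤ ({l}ᶜ : Set V).ncard := connForcingNumber_le ⟨hforce, hconn⟩
    _ = Fintype.card V - 1 := ncard_compl_singleton l
  · apply le_connForcingNumber (connected_of_dominating_vertex hc1)
    intro S hS
    by_contra hlt
    push_neg at hlt
    have hsum := Set.ncard_add_ncard_compl S
    rw [Nat.card_eq_fintype_card] at hsum
    have noforce : ∀ a b : V, a ≠ b → a ≠ c → b ≠ c → a ∉ S → b ∉ S → False := by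
      intro a b hab hac hbc haS hbS
      obtain ⟨k, hk⟩ := hS.1
      exact ((star_stuck hc1 hc2 hab hac hbc haS hbS k).1) (hk ▸ Set.mem_univ a)
    by_cases hcS : c ∈ S
    · have h2c : 1 < (Sᶜ : Set V).ncard := by omega
      obtain ⟨a, ha, b, hb, hab⟩ := (Set.one_lt_ncard).mp h2c
      exact noforce a b hab (fun h => ha (h ▸ hcS)) (fun h => hb (h ▸ hcS)) ha hb
    · by_cases h2S : 1 < S.ncard
      · obtain ⟨l1, hl1, l2, hl2, hl12⟩ := (Set.one_lt_ncard).mp h2S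
        have hbot : G.induce S = (⊥ : SimpleGraph S) := by
          ext x y
          simp only [bot_adj, iff_false]
          intro hadj
          have : G.Adj (x : V) (y : V) := hadj
          rcases hc2 _ _ this with hcon | hcon
          · exact hcS (hcon ▸ x.2)
          · exact hcS (hcon ▸ y.2)
        have hreach := hS.2.preconnected ⟨l1, hl1⟩ ⟨l2, hl2⟩
        rw [hbot, reachable_bot] at hreach
        exact hl12 (congrArg Subtype.val hreach)
      · have hU := Set.ncard_add_ncard_compl (S ∪ {c})
        rw [Nat.card_eq_fintype_card] at hU
        have hle := Set.ncard_union_le S ({c} : Set V)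
        rw [Set.ncard_singleton] at hle
        have h2c : 1 < ((S ∪ {c})ᶜ : Set V).ncard := by omega
        obtain ⟨a, ha, b, hb, hab⟩ := (Set.one_lt_ncard).mp h2c
        simp only [Set.mem_compl_iff, Set.mem_union, Set.mem_singleton_iff, not_or] at ha hb
        exact noforce a b hab ha.2 hb.2 ha.1 hb.1

-- GP: the good pair lemma
lemma good_pair [Fintype V] {G : SimpleGraph V} (hG : G.Connected) (h3 : 3 ≤ Fintype.card V)
    (hnc : ¬ ∀ v w : V, v ≠ w → G.Adj v w)
    (hns : ¬ ∃ c : V, (∀ v, v ≠ c → G.Adj c v) ∧ (∀ x y, G.Adj x y → x = c ∨ y = c)) :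
    ∃ u w : V, u ≠ w ∧ (∃ v, v ≠ u ∧ v ≠ w ∧ G.Adj v u ∧ ¬ G.Adj v w) ∧
      (G.induce ({u, w}ᶜ : Set V)).Connected := by
  classical
  push_neg at hnc
  obtain ⟨a, b, hab, hnadj⟩ := hnc
  by_cases hdom : ∃ c : V, ∀ v, v ≠ c → G.Adj c v
  · -- Case I: dominating vertex c
    obtain ⟨c, hc1⟩ := hdom
    have hac : a ≠ c := by
      rintro rfl
      exact hnadj (hc1 b hab.symm)
    have hbc : b ≠ c := by
      rintro rfl
      exact hnadj ((hc1 a hab).symm)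
    have CONNPAIR : ∀ u w : V, u ≠ c → w ≠ c → (G.induce ({u, w}ᶜ : Set V)).Connected := by
      intro u w huc hwc
      have hcmem : c ∈ ({u, w}ᶜ : Set V) := by
        simp only [Set.mem_compl_iff, Set.mem_insert_iff, Set.mem_singleton_iff, not_or]
        exact ⟨Ne.symm huc, Ne.symm hwc⟩
      exact induce_connected_of_dominating hcmem (fun x _ hxc => hc1 x hxc)
    by_cases hD : ∃ v, v ≠ a ∧ v ≠ b ∧ ((G.Adj v a ∧ ¬G.Adj v b) ∨ (G.Adj v b ∧ ¬G.Adj v a))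
    · obtain ⟨v, hva, hvb, h | h⟩ := hD
      · exact ⟨a, b, hab, ⟨v, hva, hvb, h.1, h.2⟩, CONNPAIR a b hac hbc⟩
      · exact ⟨b, a, hab.symm, ⟨v, hvb, hva, h.1, h.2⟩, CONNPAIR b a hbc hac⟩
    · push_neg at hD
      -- twins: ∀ v ∉ {a,b}, Adj v a ↔ Adj v b
      have htwin : ∀ v, v ≠ a → v ≠ b → (G.Adj v a ↔ G.Adj v b) := by
        intro v hva hvb
        exact ⟨(hD v hva hvb).1, (hD v hva hvb).2⟩
      by_cases hz : ∃ z, z ≠ c ∧ G.Adj z a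
      · obtain ⟨z, hzc, hza⟩ := hz
        have hzaa : z ≠ a := G.ne_of_adj hza
        have hzb : z ≠ b := by
          rintro rfl
          exact hnadj hza.symm
        have hadj_zb : G.Adj b z := ((htwin z hzaa hzb).mp hza).symm
        refine ⟨z, a, hzaa, ⟨b, hzb.symm, hab.symm, hadj_zb, fun h => hnadj h.symm⟩,
          CONNPAIR z a hzc hac⟩
      · push_neg at hz
        have hNa : ∀ z, G.Adj z a → z = c := by
          intro z hzadj
          by_contra hh
          exact (hz z hh) hzadj
        have hNb : ∀ z, G.Adj z b → z = c := by
          intro z hzadj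
          have hzb : z ≠ b := G.ne_of_adj hzadj
          have hza : z ≠ a := by
            rintro rfl
            exact hnadj hzadj
          exact hNa z ((htwin z hza hzb).mpr hzadj)
        -- G is not a star with center c, but c is dominating, so an edge avoids c
        have hedge : ∃ x y, G.Adj x y ∧ x ≠ c ∧ y ≠ c := by
          by_contra hh
          push_neg at hh
          apply hns
          refine ⟨c, hc1, ?_⟩
          intro x y hxy
          by_contra hcon
          push_neg at hcon
          exact hcon.2 (hh x y hxy hcon.1)
        obtain ⟨x, y, hxy, hxc, hyc⟩ := hedge
        have hxa : x ≠ a := by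
          rintro rfl
          exact hyc (hNa y hxy.symm)
        have hya : y ≠ a := by
          rintro rfl
          exact hxc (hNa x hxy)
        refine ⟨x, a, hxa, ⟨y, (G.ne_of_adj hxy).symm, hya, hxy.symm, ?_⟩,
          CONNPAIR x a hxc hac⟩
        intro h
        exact hyc (hNa y h)
  · -- Case II: no dominating vertex
    push_neg at hdom
    have hd : ∀ c : V, ∃ v, v ≠ c ∧ ¬ G.Adj c v := hdom
    have hcard2 : 2 ≤ Fintype.card V := by omega
    haveI hVne : Nonempty V := ⟨a⟩
    -- pick any root r, and u farthest from r
    obtain ⟨r⟩ := id hVne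
    obtain ⟨u, -, hmax⟩ := Finset.exists_max_image Finset.univ (G.dist r)
      Finset.univ_nonempty
    have hmax' : ∀ y, G.dist r y ≤ G.dist r u := fun y => hmax y (Finset.mem_univ y)
    obtain ⟨s, hsr, hsnadj⟩ := hd r
    have hpos : 0 < G.dist r u := by
      have h1 : 0 < G.dist r s := hG.pos_dist_of_ne (Ne.symm hsr)
      exact lt_of_lt_of_le h1 (hmax' s)
    have hur : u ≠ r := by
      rintro rfl
      rw [SimpleGraph.dist_self] at hpos
      omega
    have H1conn : (G.induce ({u}ᶜ : Set V)).Connected :=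
      core_remove_farthest G hG r u hmax' hur
    obtain ⟨c, hadj_uc⟩ := exists_adj_of_connected hG hcard2 u
    have hcu : c ≠ u := (G.ne_of_adj hadj_uc).symm
    obtain ⟨z, hzc, hznadj⟩ := hd c
    have hzu : z ≠ u := by
      rintro rfl
      exact hznadj hadj_uc.symm
    set W := ({u}ᶜ : Set V)
    have hcW : c ∈ W := hcu
    have hzW : z ∈ W := hzu
    set H := G.induce W with hH
    haveI : Nonempty W := ⟨⟨c, hcW⟩⟩
    obtain ⟨w', -, hmax2⟩ := Finset.exists_max_image Finset.univ (H.dist ⟨c, hcW⟩)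
      (Finset.univ_nonempty (α := W))
    have hmax2' : ∀ y : W, H.dist ⟨c, hcW⟩ y ≤ H.dist ⟨c, hcW⟩ w' :=
      fun y => hmax2 y (Finset.mem_univ y)
    have hcz : (⟨c, hcW⟩ : W) ≠ ⟨z, hzW⟩ := by
      intro h
      exact hzc (congrArg Subtype.val h).symm
    have hdcz : 2 ≤ H.dist ⟨c, hcW⟩ ⟨z, hzW⟩ := by
      have h0 : 0 < H.dist ⟨c, hcW⟩ ⟨z, hzW⟩ := H1conn.pos_dist_of_ne hcz
      rcases Nat.lt_or_ge (H.dist ⟨c, hcW⟩ ⟨z, hzW⟩) 2 with h | h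
      · exfalso
        have h1 : H.dist ⟨c, hcW⟩ ⟨z, hzW⟩ = 1 := by omega
        have := SimpleGraph.dist_eq_one_iff_adj.mp h1
        exact hznadj this
      · exact h
    have hdcw : 2 ≤ H.dist ⟨c, hcW⟩ w' := le_trans hdcz (hmax2' _)
    have hwc' : w' ≠ ⟨c, hcW⟩ := by
      intro h
      rw [h, SimpleGraph.dist_self] at hdcw
      omega
    have hnadj_cw : ¬ H.Adj ⟨c, hcW⟩ w' := by
      intro h
      have := SimpleGraph.dist_eq_one_iff_adj.mpr h
      omega
    have H2conn : (H.induce ({w'}ᶜ : Set W)).Connected :=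
      core_remove_farthest H H1conn ⟨c, hcW⟩ w' hmax2' hwc'
    have H3conn : (G.induce (W \ {(w' : V)})).Connected := by
      refine induce_sdiff_connected (u := (w' : V)) w'.2 ?_
      convert H2conn
    have hset : ({u, (w' : V)}ᶜ : Set V) = W \ {(w' : V)} := by
      ext x
      simp only [Set.mem_compl_iff, Set.mem_insert_iff, Set.mem_singleton_iff, not_or,
        Set.mem_diff, W]
    have huw : u ≠ (w' : V) := fun h => (w'.2 : (w' : V) ∈ ({u}ᶜ : Set V)) (by simp [← h])
    refine ⟨u, (w' : V), huw, ⟨c, hcu, ?_, hadj_uc.symm, ?_⟩, hset ▸ H3conn⟩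
    · intro h
      exact hwc' (Subtype.ext h.symm)
    · intro h
      exact hnadj_cw h

lemma induce_singleton_connected (G : SimpleGraph V) (a : V) :
    (G.induce ({a} : Set V)).Connected := by
  rw [connected_iff]
  refine ⟨fun x y => ?_, ⟨⟨a, rfl⟩⟩⟩
  have : x = y := Subtype.ext (x.2.trans y.2.symm)
  rw [this]

-- H: from a good pair, get a connected forcing set of size card - 2
lemma connForcing_le_of_good_pair [Fintype V] {G : SimpleGraph V} (hG : G.Connected)
    (hcard2 : 2 ≤ Fintype.card V) {u w v : V} (huw : u ≠ w) (hvu : v ≠ u) (hvw : v ≠ w)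
    (hadj : G.Adj v u) (hnadj : ¬ G.Adj v w)
    (hconn : (G.induce ({u, w}ᶜ : Set V)).Connected) :
    connForcingNumber G ≤ Fintype.card V - 2 := by
  classical
  set S := ({u, w}ᶜ : Set V) with hS
  have hmemS : ∀ x : V, x ∈ S ↔ x ≠ u ∧ x ≠ w := by
    intro x
    simp only [hS, Set.mem_compl_iff, Set.mem_insert_iff, Set.mem_singleton_iff, not_or]
  have hvS : v ∈ S := (hmemS v).mpr ⟨hvu, hvw⟩
  have huT : u ∈ zfStep G S := by
    right
    refine ⟨v, hvS, ?_⟩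
    ext x
    simp only [Set.mem_diff, mem_neighborSet, Set.mem_singleton_iff, hmemS, not_and_or,
      not_not, not_ne_iff]
    constructor
    · rintro ⟨hadjvx, (rfl | rfl)⟩
      · rfl
      · exact absurd hadjvx hnadj
    · rintro rfl
      exact ⟨hadj, Or.inl rfl⟩
  have hforce : IsForcingSet G S := by
    refine ⟨2, ?_⟩
    rw [show (2:ℕ) = 1 + 1 by rfl, Function.iterate_add_apply, Function.iterate_one]
    set T := zfStep G S with hT
    have hST : S ⊆ T := subset_zfStep G S
    apply Set.eq_univ_of_forall
    intro x
    by_cases hwT : w ∈ T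
    · left
      by_cases hx : x ∈ S
      · exact hST hx
      · rcases not_and_or.mp ((hmemS x).not.mp hx) with h | h
        · rw [not_ne_iff] at h; exact h ▸ huT
        · rw [not_ne_iff] at h; exact h ▸ hwT
    · by_cases hxw : x = w
      · subst hxw
        right
        obtain ⟨y, hy⟩ := exists_adj_of_connected hG hcard2 x
        have hyx : y ≠ x := (G.ne_of_adj hy).symm
        have hyT : y ∈ T := by
          by_cases hyS : y ∈ S
          · exact hST hyS
          · rcases not_and_or.mp ((hmemS y).not.mp hyS) with h | h
            · rw [not_ne_iff] at h; exact h ▸ huT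
            · rw [not_ne_iff] at h; exact absurd h hyx
        refine ⟨y, hyT, ?_⟩
        ext x'
        simp only [Set.mem_diff, mem_neighborSet, Set.mem_singleton_iff]
        constructor
        · rintro ⟨hadjyx', hx'T⟩
          by_contra hne
          have hx'S : x' ∉ S := fun h => hx'T (hST h)
          rcases not_and_or.mp ((hmemS x').not.mp hx'S) with h | h
          · rw [not_ne_iff] at h; exact hx'T (h ▸ huT)
          · rw [not_ne_iff] at h; exact hne h
        · rintro rfl
          exact ⟨hy.symm, hwT⟩
      · left
        by_cases hx : x ∈ S
        · exact hST hx
        · rcases not_and_or.mp ((hmemS x).not.mp hx) with h | h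
          · rw [not_ne_iff] at h; exact h ▸ huT
          · rw [not_ne_iff] at h; exact absurd h hxw
  calc connForcingNumber G ≤ S.ncard := connForcingNumber_le ⟨hforce, hconn⟩
  _ = Fintype.card V - 2 := ncard_compl_pair huw

-- n = 3, non-complete case
lemma connForcing_le_one_of_card_three [Fintype V] {G : SimpleGraph V} (hG : G.Connected)
    (h3 : Fintype.card V = 3) {a b : V} (hab : a ≠ b) (hnadj : ¬ G.Adj a b) :
    connForcingNumber G ≤ 1 := by
  classical
  have hm : ∃ m, m ≠ a ∧ m ≠ b := by
    have h := ncard_compl_pair hab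
    rw [h3] at h
    have : ({a, b}ᶜ : Set V).Nonempty := by
      apply Set.nonempty_of_ncard_ne_zero
      omega
    obtain ⟨m, hm⟩ := this
    simp only [Set.mem_compl_iff, Set.mem_insert_iff, Set.mem_singleton_iff, not_or] at hm
    exact ⟨m, hm.1, hm.2⟩
  obtain ⟨m, hma, hmb⟩ := hm
  have htri : ∀ x : V, x = a ∨ x = b ∨ x = m := by
    intro x
    have hsub : ({a, b, m} : Finset V) = Finset.univ := by
      apply Finset.eq_univ_of_card
      rw [h3]
      rw [Finset.card_insert_of_notMem (by simp [hab, hma.symm]),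
        Finset.card_insert_of_notMem (by simp [hmb.symm]), Finset.card_singleton]
    have := hsub ▸ Finset.mem_univ x
    simpa using this
  have hadj_am : G.Adj a m := by
    obtain ⟨y, hy⟩ := exists_adj_of_connected hG (by omega) a
    rcases htri y with h | h | h <;> rw [h] at hy
    · exact absurd hy (G.loopless.irrefl a)
    · exact absurd hy hnadj
    · exact hy
  have hadj_bm : G.Adj b m := by
    obtain ⟨y, hy⟩ := exists_adj_of_connected hG (by omega) b
    rcases htri y with h | h | h <;> rw [h] at hy
    · exact absurd hy.symm hnadj
    · exact absurd hy (G.loopless.irrefl b)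
    · exact hy
  have hforce : IsForcingSet G ({a} : Set V) := by
    refine ⟨2, ?_⟩
    rw [show (2:ℕ) = 1 + 1 by rfl, Function.iterate_add_apply, Function.iterate_one]
    set T := zfStep G ({a} : Set V) with hT
    have haT : a ∈ T := subset_zfStep G _ rfl
    have hmT : m ∈ T := by
      right
      refine ⟨a, rfl, ?_⟩
      ext x
      simp only [Set.mem_diff, mem_neighborSet, Set.mem_singleton_iff]
      constructor
      · rintro ⟨hadjax, hxa⟩
        rcases htri x with h | h | h
        · exact absurd h hxa
        · rw [h] at hadjax; exact absurd hadjax hnadj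
        · exact h
      · rintro rfl
        exact ⟨hadj_am, hma⟩
    apply Set.eq_univ_of_forall
    intro x
    by_cases hxT : x ∈ T
    · exact Or.inl hxT
    · have hxb : x = b := by
        rcases htri x with h | h | h
        · rw [h] at hxT; exact absurd haT hxT
        · exact h
        · rw [h] at hxT; exact absurd hmT hxT
      subst hxb
      right
      refine ⟨m, hmT, ?_⟩
      ext x'
      simp only [Set.mem_diff, mem_neighborSet, Set.mem_singleton_iff]
      constructor
      · rintro ⟨hadjmx', hx'T⟩
        rcases htri x' with h | h | h
        · rw [h] at hx'T; exact absurd haT hx'T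
        · exact h
        · rw [h] at hadjmx'; exact absurd hadjmx' (G.loopless.irrefl m)
      · rintro rfl
        exact ⟨hadj_bm.symm, hxT⟩
  calc connForcingNumber G ≤ ({a} : Set V).ncard :=
        connForcingNumber_le ⟨hforce, induce_singleton_connected G a⟩
  _ = 1 := Set.ncard_singleton a


/-- Let `G` be a connected graph of order `n ≥ 2`. Then `F_c(G) = n - 1` if and
only if `G` is a complete graph `K_n` (with `n ≥ 2`) or a star `K_{1,n-1}` with
`n ≥ 4`. -/
theorem connForcingNumber_eq_card_sub_one_iff {V : Type*} [Fintype V]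
    (G : SimpleGraph V) (hG : G.Connected) (n : ℕ) (hcard : Fintype.card V = n)
    (hn : 2 ≤ n) :
    connForcingNumber G = n - 1 ↔
      (Nonempty (G ≃g (⊤ : SimpleGraph (Fin n))) ∨
        (4 ≤ n ∧ Nonempty (G ≃g _root_.starGraph n))) := by
  classical
  constructor
  · intro hFc
    by_contra hRHS
    push_neg at hRHS
    obtain ⟨hnotop, hnostar⟩ := hRHS
    have hnc : ¬ ∀ v w : V, v ≠ w → G.Adj v w := by
      intro h
      exact hnotop.false ((iso_top_iff G n hcard).mpr h).some
    have hn3 : 3 ≤ n := by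
      by_contra hh
      have h2 : Fintype.card V = 2 := by omega
      apply hnc
      intro v w hvw
      obtain ⟨y, hy⟩ := exists_adj_of_connected hG (by omega) v
      have hyv : y ≠ v := (G.ne_of_adj hy).symm
      have : y = w := by
        have hsub : ({v, w} : Finset V) = Finset.univ := by
          apply Finset.eq_univ_of_card
          rw [h2, Finset.card_insert_of_notMem (by simp [hvw]), Finset.card_singleton]
        have := hsub ▸ Finset.mem_univ y
        simp only [Finset.mem_insert, Finset.mem_singleton] at this
        tauto
      exact this ▸ hy
    push_neg at hnc
    obtain ⟨aa, bb, haabb, hnadjab⟩ := hnc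
    by_cases h3 : n = 3
    · have hle := connForcing_le_one_of_card_three hG (by omega) haabb hnadjab
      omega
    · have h4 : 4 ≤ n := by omega
      have hns : ¬ ∃ c : V, (∀ v, v ≠ c → G.Adj c v) ∧
          (∀ x y, G.Adj x y → x = c ∨ y = c) := by
        intro hs
        exact (hnostar h4).false ((iso_star_iff G n hcard (by omega)).mpr hs).some
      obtain ⟨u, w, huw, ⟨v, hvu, hvw, hadjv, hnadjv⟩, hconn⟩ :=
        good_pair hG (by omega) (by push_neg; exact ⟨aa, bb, haabb, hnadjab⟩) hns
      have hle := connForcing_le_of_good_pair hG (by omega) huw hvu hvw hadjv hnadjv hconn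
      rw [hcard] at hle
      omega
  · rintro (htop | ⟨h4, hstar⟩)
    · have hcomp := (iso_top_iff G n hcard).mp htop
      rw [← hcard]
      exact connForcing_complete hcomp (by omega)
    · obtain ⟨c, hc1, hc2⟩ := (iso_star_iff G n hcard (by omega)).mp hstar
      rw [← hcard]
      exact connForcing_star hc1 hc2 (by omega)
end Star
end

section
/- For every integer Δ ≥ 3, there exists a connected graph G of order n with maximum degree Δ such that F_c(G) = (Δ/(Δ+1))·n + 1; explicitly, the graph obtained from the star K_{1,Δ} by subdividing every edge exactly twice and then attaching Δ−1 pendant edges to each leaf has order n = (Δ+1)² and connected forcing number n − Δ. -/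
open SimpleGraph

variable {V : Type*}

section Construction

inductive Vtx (Δ : ℕ) where
  | center : Vtx Δ
  | x (i : Fin Δ) : Vtx Δ
  | y (i : Fin Δ) : Vtx Δ
  | leaf (i : Fin Δ) : Vtx Δ
  | pend (i : Fin Δ) (j : Fin (Δ - 1)) : Vtx Δ
  deriving DecidableEq
open Vtx
def vrel (Δ : ℕ) : Vtx Δ → Vtx Δ → Bool
  | .center, .x _ => true
  | .x i, .y i' => i = i'
  | .y i, .leaf i' => i = i'
  | .leaf i, .pend i' _ => i = i'
  | _, _ => false
def Gr (Δ : ℕ) : SimpleGraph (Vtx Δ) := SimpleGraph.fromRel (fun u v => vrel Δ u v = true)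

def vEquiv (Δ : ℕ) : Vtx Δ ≃ (Unit ⊕ Fin Δ ⊕ Fin Δ ⊕ Fin Δ ⊕ Fin Δ × Fin (Δ-1)) where
  toFun v := match v with
    | .center => Sum.inl ()
    | .x i => Sum.inr (Sum.inl i)
    | .y i => Sum.inr (Sum.inr (Sum.inl i))
    | .leaf i => Sum.inr (Sum.inr (Sum.inr (Sum.inl i)))
    | .pend i j => Sum.inr (Sum.inr (Sum.inr (Sum.inr (i, j))))
  invFun s := match s with
    | Sum.inl _ => .center
    | Sum.inr (Sum.inl i) => .x i
    | Sum.inr (Sum.inr (Sum.inl i)) => .y i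
    | Sum.inr (Sum.inr (Sum.inr (Sum.inl i))) => .leaf i
    | Sum.inr (Sum.inr (Sum.inr (Sum.inr (i, j)))) => .pend i j
  left_inv v := by cases v <;> rfl
  right_inv s := by rcases s with _ | (_ | (_ | (_ | ⟨i, j⟩))) <;> rfl

instance (Δ : ℕ) : Fintype (Vtx Δ) := Fintype.ofEquiv _ (vEquiv Δ).symm

lemma card_vtx (Δ : ℕ) (h : 1 ≤ Δ) : Fintype.card (Vtx Δ) = (Δ + 1) ^ 2 := by
  rw [Fintype.card_congr (vEquiv Δ)]
  obtain ⟨d, rfl⟩ := Nat.exists_eq_add_of_le h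
  simp [Fintype.card_sum, Fintype.card_prod, Nat.add_sub_cancel_left]
  ring

variable {Δ : ℕ}

lemma nbr_center : (Gr Δ).neighborSet center = Set.range x := by
  ext w; cases w <;> simp [Gr, SimpleGraph.fromRel_adj, vrel]

lemma nbr_x (i : Fin Δ) : (Gr Δ).neighborSet (x i) = {Vtx.center, y i} := by
  ext w; cases w <;> simp [Gr, SimpleGraph.fromRel_adj, vrel] <;> exact eq_comm

lemma nbr_y (i : Fin Δ) : (Gr Δ).neighborSet (y i) = {x i, leaf i} := by
  ext w; cases w <;> simp [Gr, SimpleGraph.fromRel_adj, vrel] <;> exact eq_comm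

lemma nbr_leaf (i : Fin Δ) : (Gr Δ).neighborSet (leaf i) = {y i} ∪ Set.range (pend i) := by
  ext w; cases w <;> simp [Gr, SimpleGraph.fromRel_adj, vrel] <;> exact eq_comm
lemma nbr_pend (i : Fin Δ) (j : Fin (Δ-1)) : (Gr Δ).neighborSet (pend i j) = {leaf i} := by
  ext w; cases w <;> simp [Gr, SimpleGraph.fromRel_adj, vrel]

-- pendants can only be forced by their leaf; two missing pendants stay missing
lemma pend_stays {S : Set (Vtx Δ)} {i : Fin Δ} {j j' : Fin (Δ-1)} (hjj : j ≠ j')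
    (hj : pend i j ∉ S) (hj' : pend i j' ∉ S) :
    pend i j ∉ zfStep (Gr Δ) S ∧ pend i j' ∉ zfStep (Gr Δ) S := by
  have key : ∀ (a b : Fin (Δ-1)), a ≠ b → pend i a ∉ S → pend i b ∉ S →
      pend i a ∉ zfStep (Gr Δ) S := by
    intro a b hab ha hb
    intro hmem
    rcases hmem with h | ⟨v, hv, hset⟩
    · exact ha h
    · have hadj : pend i a ∈ (Gr Δ).neighborSet v := by
        rw [Set.ext_iff] at hset
        have := (hset (pend i a)).2 rfl
        exact this.1
      have hv_leaf : v = leaf i := by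
        have : v ∈ (Gr Δ).neighborSet (pend i a) := ((Gr Δ).adj_comm _ _).mp hadj
        rw [nbr_pend] at this
        exact this
      subst hv_leaf
      have : pend i b ∈ (Gr Δ).neighborSet (leaf i) \ S := by
        constructor
        · rw [nbr_leaf]; right; exact ⟨b, rfl⟩
        · exact hb
      rw [hset] at this
      have := Set.mem_singleton_iff.mp this
      injection this with h1 h2
      exact hab h2.symm
  exact ⟨key j j' hjj hj hj', key j' j (Ne.symm hjj) hj' hj⟩

lemma uniq_pend {S : Set (Vtx Δ)} (hf : IsForcingSet (Gr Δ) S) {i : Fin Δ}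
    {j j' : Fin (Δ-1)} (hj : pend i j ∉ S) (hj' : pend i j' ∉ S) : j = j' := by
  by_contra hjj
  obtain ⟨N, hN⟩ := hf
  have key : ∀ n, pend i j ∉ (zfStep (Gr Δ))^[n] S ∧ pend i j' ∉ (zfStep (Gr Δ))^[n] S := by
    intro n
    induction n with
    | zero => exact ⟨hj, hj'⟩
    | succ n ih =>
      rw [Function.iterate_succ_apply']
      exact pend_stays hjj ih.1 ih.2
  have := (key N).1
  rw [hN] at this
  exact this (Set.mem_univ _)

lemma exists_pend_mem {S : Set (Vtx Δ)} (hΔ : 3 ≤ Δ) (hf : IsForcingSet (Gr Δ) S)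
    (i : Fin Δ) : ∃ j, pend i j ∈ S := by
  by_contra h
  push_neg at h
  have h2 : (1 : ℕ) < Δ - 1 := by omega
  have := uniq_pend hf (h ⟨0, by omega⟩) (h ⟨1, by omega⟩)
  simp [Fin.ext_iff] at this

-- constancy of adjacency-invariant predicates along connected induced subgraphs
lemma induce_const {S : Set (Vtx Δ)} (hc : ((Gr Δ).induce S).Connected) {P : Vtx Δ → Prop}
    (hP : ∀ u v : Vtx Δ, u ∈ S → v ∈ S → (Gr Δ).Adj u v → (P u ↔ P v))
    {a b : Vtx Δ} (ha : a ∈ S) (hb : b ∈ S) : P a ↔ P b := by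
  suffices key : ∀ (p q : S) (_ : ((Gr Δ).induce S).Walk p q), P p.val ↔ P q.val by
    obtain ⟨w⟩ := hc.preconnected ⟨a, ha⟩ ⟨b, hb⟩
    exact key _ _ w
  intro p q w
  induction w with
  | nil => rfl
  | @cons u v _ h _ ih =>
    have hadj : (Gr Δ).Adj u.val v.val := h
    exact (hP u.val v.val u.2 v.2 hadj).trans ih

def isBranch (i : Fin Δ) : Vtx Δ → Prop
  | Vtx.center => False
  | x i' => i' = i
  | y i' => i' = i
  | leaf i' => i' = i
  | pend i' _ => i' = i
def belowX (i : Fin Δ) : Vtx Δ → Prop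
  | y i' => i' = i
  | leaf i' => i' = i
  | pend i' _ => i' = i
  | _ => False
def belowY (i : Fin Δ) : Vtx Δ → Prop
  | leaf i' => i' = i
  | pend i' _ => i' = i
  | _ => False
def belowL (i : Fin Δ) : Vtx Δ → Prop
  | pend i' _ => i' = i
  | _ => False

lemma cutC {u v : Vtx Δ} (i : Fin Δ) (hu : u ≠ Vtx.center) (hv : v ≠ Vtx.center)
    (h : (Gr Δ).Adj u v) : isBranch i u ↔ isBranch i v := by
  cases u <;> cases v <;> simp_all [Gr, SimpleGraph.fromRel_adj, vrel, isBranch]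

lemma cutX {u v : Vtx Δ} (i : Fin Δ) (hu : u ≠ x i) (hv : v ≠ x i)
    (h : (Gr Δ).Adj u v) : belowX i u ↔ belowX i v := by
  cases u <;> cases v <;>
    simp_all [Gr, SimpleGraph.fromRel_adj, vrel, belowX, Vtx.x.injEq] <;> omega

lemma cutY {u v : Vtx Δ} (i : Fin Δ) (hu : u ≠ y i) (hv : v ≠ y i)
    (h : (Gr Δ).Adj u v) : belowY i u ↔ belowY i v := by
  cases u <;> cases v <;>
    simp_all [Gr, SimpleGraph.fromRel_adj, vrel, belowY] <;> omega

lemma cutL {u v : Vtx Δ} (i : Fin Δ) (hu : u ≠ leaf i) (hv : v ≠ leaf i)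
    (h : (Gr Δ).Adj u v) : belowL i u ↔ belowL i v := by
  cases u <;> cases v <;>
    simp_all [Gr, SimpleGraph.fromRel_adj, vrel, belowL] <;> omega

section Members
variable {S : Set (Vtx Δ)} (hΔ : 3 ≤ Δ) (hf : IsForcingSet (Gr Δ) S)
  (hc : ((Gr Δ).induce S).Connected)

lemma other_idx (hΔ' : 2 ≤ Δ) (i : Fin Δ) : ∃ k : Fin Δ, k ≠ i := by
  rcases eq_or_ne i ⟨0, by omega⟩ with h | h
  · exact ⟨⟨1, by omega⟩, by simp [h, Fin.ext_iff]⟩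
  · exact ⟨⟨0, by omega⟩, fun hh => h hh.symm⟩

include hΔ hf hc

lemma mem_leaf (i : Fin Δ) : leaf i ∈ S := by
  by_contra hL
  obtain ⟨k, hk⟩ := other_idx (by omega) i
  obtain ⟨j1, hj1⟩ := exists_pend_mem hΔ hf i
  obtain ⟨j2, hj2⟩ := exists_pend_mem hΔ hf k
  have := induce_const hc (P := belowL i)
    (fun u v hu hv hadj => cutL i (fun h => hL (h ▸ hu)) (fun h => hL (h ▸ hv)) hadj) hj1 hj2
  rw [show belowL i (pend i j1) ↔ True by simp [belowL],
      show belowL i (pend k j2) ↔ False by simp [belowL]; exact hk] at this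
  simp at this

lemma mem_y (i : Fin Δ) : y i ∈ S := by
  by_contra hY
  obtain ⟨k, hk⟩ := other_idx (by omega) i
  have h1 := mem_leaf hΔ hf hc i
  have h2 := mem_leaf hΔ hf hc k
  have := induce_const hc (P := belowY i)
    (fun u v hu hv hadj => cutY i (fun h => hY (h ▸ hu)) (fun h => hY (h ▸ hv)) hadj) h1 h2
  rw [show belowY i (leaf i) ↔ True by simp [belowY],
      show belowY i (leaf k) ↔ False by simp [belowY]; exact hk] at this
  simp at this

lemma mem_x (i : Fin Δ) : x i ∈ S := by
  by_contra hX
  obtain ⟨k, hk⟩ := other_idx (by omega) i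
  have h1 := mem_leaf hΔ hf hc i
  have h2 := mem_leaf hΔ hf hc k
  have := induce_const hc (P := belowX i)
    (fun u v hu hv hadj => cutX i (fun h => hX (h ▸ hu)) (fun h => hX (h ▸ hv)) hadj) h1 h2
  rw [show belowX i (leaf i) ↔ True by simp [belowX],
      show belowX i (leaf k) ↔ False by simp [belowX]; exact hk] at this
  simp at this

lemma mem_center : Vtx.center ∈ S := by
  by_contra hC
  have i : Fin Δ := ⟨0, by omega⟩
  obtain ⟨k, hk⟩ := other_idx (by omega) i
  have h1 := mem_leaf hΔ hf hc i
  have h2 := mem_leaf hΔ hf hc k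
  have := induce_const hc (P := isBranch i)
    (fun u v hu hv hadj => cutC i (fun h => hC (h ▸ hu)) (fun h => hC (h ▸ hv)) hadj) h1 h2
  rw [show isBranch i (leaf i) ↔ True by simp [isBranch],
      show isBranch i (leaf k) ↔ False by simp [isBranch]; exact hk] at this
  simp at this

end Members


def bri (i0 : Fin Δ) : Vtx Δ → Fin Δ
  | Vtx.center => i0
  | x i => i
  | y i => i
  | leaf i => i
  | pend i _ => i

lemma lower_bound {S : Set (Vtx Δ)} (hΔ : 3 ≤ Δ) (hf : IsForcingSet (Gr Δ) S)
    (hc : ((Gr Δ).induce S).Connected) : (Δ + 1) ^ 2 - Δ ≤ S.ncard := by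
  classical
  have hpend : ∀ v : Vtx Δ, v ∉ S → ∃ i j, v = pend i j := by
    intro v hv
    cases v with
    | center => exact absurd (mem_center hΔ hf hc) hv
    | x i => exact absurd (mem_x hΔ hf hc i) hv
    | y i => exact absurd (mem_y hΔ hf hc i) hv
    | leaf i => exact absurd (mem_leaf hΔ hf hc i) hv
    | pend i j => exact ⟨i, j, rfl⟩
  set i0 : Fin Δ := ⟨0, by omega⟩
  have hinj : Function.Injective (fun v : ↥(Sᶜ) => bri i0 v.val) := by
    intro a b hab
    obtain ⟨i, j, ha⟩ := hpend a.1 a.2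
    obtain ⟨i', j', hb⟩ := hpend b.1 b.2
    simp only [ha, hb, bri] at hab
    subst hab
    have hj := uniq_pend hf (ha ▸ a.2) (hb ▸ b.2)
    exact Subtype.ext (by rw [ha, hb, hj])
  have hcard : Fintype.card ↥(Sᶜ) ≤ Δ := by
    have := Fintype.card_le_of_injective _ hinj
    simpa using this
  have h1 : S.ncard + Sᶜ.ncard = (Δ + 1) ^ 2 := by
    rw [Set.ncard_add_ncard_compl, Nat.card_eq_fintype_card, card_vtx Δ (by omega)]
  have h2 : Sᶜ.ncard = Fintype.card ↥(Sᶜ) := by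
    rw [← Nat.card_coe_set_eq, Nat.card_eq_fintype_card]
  omega

lemma ind_adj {S : Set (Vtx Δ)} {a b : Vtx Δ} (ha : a ∈ S) (hb : b ∈ S)
    (h : (Gr Δ).Adj a b) : ((Gr Δ).induce S).Adj ⟨a, ha⟩ ⟨b, hb⟩ := h

lemma adjCX (i : Fin Δ) : (Gr Δ).Adj center (x i) := by simp [Gr, SimpleGraph.fromRel_adj, vrel]
lemma adjXY (i : Fin Δ) : (Gr Δ).Adj (x i) (y i) := by simp [Gr, SimpleGraph.fromRel_adj, vrel]
lemma adjYL (i : Fin Δ) : (Gr Δ).Adj (y i) (leaf i) := by simp [Gr, SimpleGraph.fromRel_adj, vrel]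
lemma adjLP (i : Fin Δ) (j : Fin (Δ-1)) : (Gr Δ).Adj (leaf i) (pend i j) := by
  simp [Gr, SimpleGraph.fromRel_adj, vrel]

lemma gr_connected (hΔ : 1 ≤ Δ) : (Gr Δ).Connected := by
  rw [SimpleGraph.connected_iff]
  constructor
  · have key : ∀ v : Vtx Δ, (Gr Δ).Reachable center v := by
      intro v
      cases v with
      | center => exact SimpleGraph.Reachable.refl _
      | x i => exact (adjCX i).reachable
      | y i => exact (adjCX i).reachable.trans (adjXY i).reachable
      | leaf i => exact ((adjCX i).reachable.trans (adjXY i).reachable).trans (adjYL i).reachable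
      | pend i j => exact (((adjCX i).reachable.trans (adjXY i).reachable).trans
          (adjYL i).reachable).trans (adjLP i j).reachable
    exact fun u v => (key u).symm.trans (key v)
  · exact ⟨center⟩

def S0 (Δ : ℕ) (h : 3 ≤ Δ) : Set (Vtx Δ) :=
  (Set.range (fun i : Fin Δ => pend i ⟨0, by omega⟩))ᶜ

lemma mem_S0_iff {h : 3 ≤ Δ} {v : Vtx Δ} : v ∈ S0 Δ h ↔ ∀ i : Fin Δ, v ≠ pend i ⟨0, by omega⟩ := by
  simp [S0]
  tauto

lemma S0_forcing (h : 3 ≤ Δ) : IsForcingSet (Gr Δ) (S0 Δ h) := by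
  refine ⟨1, ?_⟩
  rw [Function.iterate_one]
  ext w
  simp only [Set.mem_univ, iff_true]
  by_cases hw : w ∈ S0 Δ h
  · exact Or.inl hw
  · right
    rw [mem_S0_iff] at hw
    push_neg at hw
    obtain ⟨i, rfl⟩ := hw
    refine ⟨leaf i, by rw [mem_S0_iff]; intro k; simp, ?_⟩
    ext u
    simp only [Set.mem_diff, Set.mem_singleton_iff, nbr_leaf]
    constructor
    · rintro ⟨hu1, hu2⟩
      rw [mem_S0_iff] at hu2
      push_neg at hu2
      obtain ⟨k, rfl⟩ := hu2
      rcases hu1 with hu1 | ⟨j, hj⟩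
      · simp at hu1
      · injection hj.symm with h1 h2
        rw [h1]
    · rintro rfl
      constructor
      · exact Or.inr ⟨_, rfl⟩
      · rw [mem_S0_iff]; push_neg; exact ⟨i, rfl⟩

lemma S0_conn (h : 3 ≤ Δ) : ((Gr Δ).induce (S0 Δ h)).Connected := by
  have hC : Vtx.center ∈ S0 Δ h := by rw [mem_S0_iff]; intro k; simp
  have hX : ∀ i, x i ∈ S0 Δ h := by intro i; rw [mem_S0_iff]; intro k; simp
  have hY : ∀ i, y i ∈ S0 Δ h := by intro i; rw [mem_S0_iff]; intro k; simp
  have hL : ∀ i, leaf i ∈ S0 Δ h := by intro i; rw [mem_S0_iff]; intro k; simp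
  rw [SimpleGraph.connected_iff]
  constructor
  · have key : ∀ v : ↥(S0 Δ h), ((Gr Δ).induce (S0 Δ h)).Reachable ⟨center, hC⟩ v := by
      rintro ⟨v, hv⟩
      have rX : ∀ i, ((Gr Δ).induce (S0 Δ h)).Reachable ⟨center, hC⟩ ⟨x i, hX i⟩ :=
        fun i => (ind_adj hC (hX i) (adjCX i)).reachable
      have rY : ∀ i, ((Gr Δ).induce (S0 Δ h)).Reachable ⟨center, hC⟩ ⟨y i, hY i⟩ :=
        fun i => (rX i).trans (ind_adj (hX i) (hY i) (adjXY i)).reachable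
      have rL : ∀ i, ((Gr Δ).induce (S0 Δ h)).Reachable ⟨center, hC⟩ ⟨leaf i, hL i⟩ :=
        fun i => (rY i).trans (ind_adj (hY i) (hL i) (adjYL i)).reachable
      cases v with
      | center => exact SimpleGraph.Reachable.refl _
      | x i => exact rX i
      | y i => exact rY i
      | leaf i => exact rL i
      | pend i j => exact (rL i).trans (ind_adj (hL i) hv (adjLP i j)).reachable
    exact fun u v => (key u).symm.trans (key v)
  · exact ⟨⟨center, hC⟩⟩

lemma S0_ncard (h : 3 ≤ Δ) : (S0 Δ h).ncard = (Δ + 1) ^ 2 - Δ := by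
  have hinj : Function.Injective (fun i : Fin Δ => pend (Δ := Δ) i ⟨0, by omega⟩) := by
    intro a b hab; injection hab
  have h1 : (Set.range (fun i : Fin Δ => pend (Δ := Δ) i ⟨0, by omega⟩)).ncard = Δ := by
    rw [← Nat.card_coe_set_eq, Nat.card_range_of_injective hinj, Nat.card_eq_fintype_card,
      Fintype.card_fin]
  have h2 := Set.ncard_add_ncard_compl (Set.range (fun i : Fin Δ => pend (Δ := Δ) i ⟨0, by omega⟩))
  rw [Nat.card_eq_fintype_card, card_vtx Δ (by omega)] at h2
  have h3 : (S0 Δ h).ncard =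
      (Set.range (fun i : Fin Δ => pend (Δ := Δ) i ⟨0, by omega⟩))ᶜ.ncard := rfl
  omega

instance : DecidableRel (Gr Δ).Adj := fun u v =>
  decidable_of_iff (u ≠ v ∧ (vrel Δ u v = true ∨ vrel Δ v u = true))
    (by rw [Gr, SimpleGraph.fromRel_adj])


lemma x_inj : Function.Injective (x (Δ := Δ)) := fun a b h => by injection h
lemma pend_inj (i : Fin Δ) : Function.Injective (pend i) := fun a b h => by injection h

lemma deg_center : (Gr Δ).degree center = Δ := by
  have h : (Gr Δ).neighborFinset center = Finset.univ.image x := by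
    rw [SimpleGraph.neighborFinset_def, Set.toFinset_congr nbr_center, Set.toFinset_range]
  rw [SimpleGraph.degree, h, Finset.card_image_of_injective _ x_inj, Finset.card_univ,
    Fintype.card_fin]

lemma deg_x (i : Fin Δ) : (Gr Δ).degree (x i) = 2 := by
  have h : (Gr Δ).neighborFinset (x i) = {Vtx.center, y i} := by
    rw [SimpleGraph.neighborFinset_def, Set.toFinset_congr (nbr_x i)]
    simp
  rw [SimpleGraph.degree, h]
  simp

lemma deg_y (i : Fin Δ) : (Gr Δ).degree (y i) = 2 := by
  have h : (Gr Δ).neighborFinset (y i) = {x i, leaf i} := by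
    rw [SimpleGraph.neighborFinset_def, Set.toFinset_congr (nbr_y i)]
    simp
  rw [SimpleGraph.degree, h]
  simp

lemma deg_pend (i : Fin Δ) (j : Fin (Δ-1)) : (Gr Δ).degree (pend i j) = 1 := by
  have h : (Gr Δ).neighborFinset (pend i j) = {leaf i} := by
    rw [SimpleGraph.neighborFinset_def, Set.toFinset_congr (nbr_pend i j)]
    simp
  rw [SimpleGraph.degree, h, Finset.card_singleton]

lemma deg_leaf (hΔ : 1 ≤ Δ) (i : Fin Δ) : (Gr Δ).degree (leaf i) = Δ := by
  have h : (Gr Δ).neighborFinset (leaf i) = insert (y i) (Finset.univ.image (pend i)) := by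
    rw [SimpleGraph.neighborFinset_def, Set.toFinset_congr (nbr_leaf i)]
    rw [Set.toFinset_union, Set.toFinset_singleton, Set.toFinset_range]
    rfl
  rw [SimpleGraph.degree, h, Finset.card_insert_of_notMem (by simp),
    Finset.card_image_of_injective _ (pend_inj i), Finset.card_univ, Fintype.card_fin]
  omega

lemma maxDeg (hΔ : 2 ≤ Δ) : (Gr Δ).maxDegree = Δ := by
  apply le_antisymm
  · apply SimpleGraph.maxDegree_le_of_forall_degree_le
    intro v
    cases v with
    | center => rw [deg_center]
    | x i => rw [deg_x]; omega
    | y i => rw [deg_y]; omega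
    | leaf i => rw [deg_leaf (by omega)]
    | pend i j => rw [deg_pend]; omega
  · conv_lhs => rw [← deg_center (Δ := Δ)]
    exact SimpleGraph.degree_le_maxDegree _ _


lemma connF_val (hΔ : 3 ≤ Δ) : connForcingNumber (Gr Δ) = (Δ + 1) ^ 2 - Δ := by
  unfold connForcingNumber
  have hmem : (Δ + 1) ^ 2 - Δ ∈ Set.ncard '' {S : Set (Vtx Δ) | IsConnForcingSet (Gr Δ) S} :=
    ⟨S0 Δ hΔ, ⟨S0_forcing hΔ, S0_conn hΔ⟩, S0_ncard hΔ⟩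
  apply le_antisymm
  · exact Nat.sInf_le hmem
  · apply le_csInf ⟨_, hmem⟩
    rintro b ⟨S, hS, rfl⟩
    exact lower_bound hΔ hS.1 hS.2

end Construction

/-- For every `Δ ≥ 3` there is a connected graph `G` of order `n = (Δ+1)²` with
maximum degree `Δ` and `F_c(G) = n - Δ`, i.e. `F_c(G) = (Δ/(Δ+1))·n + 1`
(expressed multiplicatively as `(Δ+1)·F_c(G) = Δ·n + (Δ+1)`). -/
theorem exists_connected_graph_large_connForcingNumber (Δ : ℕ) (hΔ : 3 ≤ Δ) :
    ∃ (W : Type) (instV : Fintype W) (G : SimpleGraph W)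
      (instA : DecidableRel G.Adj),
      G.Connected ∧ Fintype.card W = (Δ + 1) ^ 2 ∧
      @SimpleGraph.maxDegree W G instV instA = Δ ∧
      connForcingNumber G = (Δ + 1) ^ 2 - Δ ∧
      (Δ + 1) * connForcingNumber G = Δ * (Δ + 1) ^ 2 + (Δ + 1) := by
  refine ⟨Vtx Δ, inferInstance, Gr Δ, inferInstance, gr_connected (by omega),
    card_vtx Δ (by omega), maxDeg (by omega), connF_val hΔ, ?_⟩
  rw [connF_val hΔ]
  have h : Δ ≤ (Δ + 1) ^ 2 := by nlinarith
  zify [h]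
  ring
end

section
/- If G is a connected graph, then F_c(G) ≥ b(G) + 1, where b(G) is the number of 2-connected blocks of G. -/
open SimpleGraph

variable {V : Type*}

/-- `B` is (the vertex set of) a block of `G`: a maximal nonempty set of
vertices inducing a connected subgraph with no cut vertex of its own. -/
def IsBlockSet (G : SimpleGraph V) (B : Set V) : Prop :=
  (B.Nonempty ∧ (G.induce B).Connected ∧
      ∀ v ∈ B, (G.induce (B \ {v})).Preconnected) ∧
    ∀ B' : Set V, B ⊆ B' →
      (B'.Nonempty ∧ (G.induce B').Connected ∧
        ∀ v ∈ B', (G.induce (B' \ {v})).Preconnected) → B' = B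

/-- `b(G)`: the number of 2-connected blocks of `G`, i.e. blocks with at least
3 vertices. -/
noncomputable def numTwoConnBlocks (G : SimpleGraph V) : ℕ :=
  {B : Set V | IsBlockSet G B ∧ 3 ≤ B.ncard}.ncard


namespace ZFAux


variable {V : Type*} {G : SimpleGraph V}

/-- connectivity within a vertex set `X`, via walks of `G` staying in `X`. -/
def ConnOn (G : SimpleGraph V) (X : Set V) (a b : V) : Prop :=
  ∃ w : G.Walk a b, ∀ x ∈ w.support, x ∈ X

lemma ConnOn.mono {X Y : Set V} (h : X ⊆ Y) {a b} (hc : ConnOn G X a b) :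
    ConnOn G Y a b := by
  obtain ⟨w, hw⟩ := hc
  exact ⟨w, fun x hx => h (hw x hx)⟩

lemma ConnOn.refl {X : Set V} {a : V} (ha : a ∈ X) : ConnOn G X a a :=
  ⟨Walk.nil, by simpa using ha⟩

lemma ConnOn.symm {X : Set V} {a b : V} (h : ConnOn G X a b) : ConnOn G X b a := by
  obtain ⟨w, hw⟩ := h
  exact ⟨w.reverse, fun x hx => hw x (by simpa using hx)⟩

lemma ConnOn.trans {X : Set V} {a b c : V} (h1 : ConnOn G X a b) (h2 : ConnOn G X b c) :
    ConnOn G X a c := by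
  obtain ⟨w1, hw1⟩ := h1
  obtain ⟨w2, hw2⟩ := h2
  refine ⟨w1.append w2, fun x hx => ?_⟩
  rw [Walk.mem_support_append_iff] at hx
  exact hx.elim (hw1 x) (hw2 x)

lemma ConnOn.mem_left {X : Set V} {a b : V} (h : ConnOn G X a b) : a ∈ X := by
  obtain ⟨w, hw⟩ := h
  exact hw a w.start_mem_support

lemma ConnOn.mem_right {X : Set V} {a b : V} (h : ConnOn G X a b) : b ∈ X := by
  obtain ⟨w, hw⟩ := h
  exact hw b w.end_mem_support

lemma connOn_of_reachable {X : Set V} {a b : ↥X}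
    (h : (G.induce X).Reachable a b) : ConnOn G X (a : V) (b : V) := by
  obtain ⟨w⟩ := h
  refine ⟨w.map (SimpleGraph.Embedding.induce X).toHom, fun x hx => ?_⟩
  erw [Walk.support_map, List.mem_map] at hx
  obtain ⟨y, _, rfl⟩ := hx
  exact y.2

lemma reachable_of_connOn {X : Set V} {a b : V} (h : ConnOn G X a b)
    (ha : a ∈ X) (hb : b ∈ X) :
    (G.induce X).Reachable ⟨a, ha⟩ ⟨b, hb⟩ := by
  obtain ⟨w, hw⟩ := h
  induction w with
  | nil => rfl
  | @cons u c v huc w ih =>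
    have hc : c ∈ X := hw c (by simp)
    have h1 : (G.induce X).Adj ⟨u, ha⟩ ⟨c, hc⟩ := huc
    exact h1.reachable.trans (ih hc hb (fun x hx => hw x (by simp only [Walk.support_cons, List.mem_cons]; exact Or.inr hx)))

lemma preconnected_induce_iff {X : Set V} :
    (G.induce X).Preconnected ↔ ∀ a ∈ X, ∀ b ∈ X, ConnOn G X a b := by
  constructor
  · intro h a ha b hb
    exact connOn_of_reachable (h ⟨a, ha⟩ ⟨b, hb⟩)
  · intro h a b
    exact reachable_of_connOn (h a a.2 b b.2) a.2 b.2

lemma connected_induce_iff {X : Set V} :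
    (G.induce X).Connected ↔ X.Nonempty ∧ ∀ a ∈ X, ∀ b ∈ X, ConnOn G X a b := by
  rw [connected_iff, preconnected_induce_iff, Set.nonempty_coe_sort, and_comm]


lemma connOn_support_end {x v : V} (Q : G.Walk x v) {a : V} (ha : a ∈ Q.support) :
    ConnOn G {y | y ∈ Q.support} a v := by
  induction Q with
  | nil =>
    simp only [Walk.support_nil, List.mem_singleton] at ha
    subst ha
    exact ⟨Walk.nil, by simp⟩
  | @cons u c v2 h Q' ih =>
    rcases List.mem_cons.mp (by simpa using ha) with h1 | h2
    · subst h1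
      exact ⟨Walk.cons h Q', fun y hy => hy⟩
    · obtain ⟨w, hw⟩ := ih h2
      refine ⟨w, fun y hy => ?_⟩
      have := hw y hy
      simp only [Set.mem_setOf_eq, Walk.support_cons, List.mem_cons]
      exact Or.inr this

lemma path_split {b1 b2 : V} (P : G.Walk b1 b2) (hP : P.IsPath) (w : V) {a : V}
    (ha : a ∈ P.support) (haw : a ≠ w) :
    ∃ c, (c = b1 ∨ c = b2) ∧ c ≠ w ∧ ConnOn G ({y | y ∈ P.support} \ {w}) a c := by
  induction P with
  | nil =>
    simp only [Walk.support_nil, List.mem_singleton] at ha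
    subst ha
    refine ⟨a, Or.inl rfl, haw, Walk.nil, ?_⟩
    intro x hx
    simp only [Walk.support_nil, List.mem_singleton] at hx
    subst hx
    exact ⟨by simp, haw⟩
  | @cons u c v2 h Q ih =>
    have hQpath : Q.IsPath := hP.of_cons
    have hu_not : u ∉ Q.support := by
      have := hP.support_nodup
      simp only [Walk.support_cons, List.nodup_cons] at this
      exact this.1
    have hsub : ({y | y ∈ Q.support} \ {w} : Set V) ⊆
        {y | y ∈ (Walk.cons h Q).support} \ {w} := by
      intro x hx
      refine ⟨?_, hx.2⟩
      simp only [Set.mem_setOf_eq, Walk.support_cons, List.mem_cons]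
      exact Or.inr hx.1
    rcases List.mem_cons.mp (by simpa using ha) with h1 | h2
    · subst h1
      refine ⟨a, Or.inl rfl, haw, Walk.nil, ?_⟩
      intro x hx
      simp only [Walk.support_nil, List.mem_singleton] at hx
      subst hx
      exact ⟨by simp, haw⟩
    · obtain ⟨c', hc'12, hc'w, hconn⟩ := ih hQpath h2
      rcases hc'12 with hcc | hcv
      · -- c' = c : try to extend to u via the edge, unless w = u
        by_cases hwu : w = u
        · -- u is removed; connect a to v2 inside Q.support (u ∉ Q.support)
          subst hwu
          obtain ⟨w2, hw2⟩ := connOn_support_end Q h2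
          refine ⟨v2, Or.inr rfl, fun hv2 => hu_not (hv2 ▸ Q.end_mem_support), w2, ?_⟩
          intro x hx
          have hxQ := hw2 x hx
          constructor
          · simp only [Set.mem_setOf_eq, Walk.support_cons, List.mem_cons]
            exact Or.inr hxQ
          · exact fun hxu => hu_not ((Set.mem_singleton_iff.mp hxu) ▸ hxQ)
        · -- extend a → c' = c → u
          subst hcc
          obtain ⟨w1, hw1⟩ := hconn
          refine ⟨u, Or.inl rfl, fun h' => hwu h'.symm, ?_⟩
          refine ⟨w1.append (Walk.cons h.symm Walk.nil), fun x hx => ?_⟩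
          rw [Walk.mem_support_append_iff] at hx
          rcases hx with hx | hx
          · exact hsub (hw1 x hx)
          · simp only [Walk.support_cons, Walk.support_nil, List.mem_cons,
              List.not_mem_nil, or_false] at hx
            rcases hx with rfl | rfl
            · refine ⟨?_, hc'w⟩
              simp only [Set.mem_setOf_eq, Walk.support_cons, List.mem_cons]
              exact Or.inr Q.start_mem_support
            · exact ⟨by simp, fun hxu => hwu (Set.mem_singleton_iff.mp hxu).symm⟩
      · obtain ⟨w1, hw1⟩ := hconn
        exact ⟨c', Or.inr hcv, hc'w, w1, fun x hx => hsub (hw1 x hx)⟩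

lemma first_hit {x v : V} (Q : G.Walk x v) (Bs : Set V) (hv : v ∈ Bs) :
    ∃ y, y ∈ Bs ∧ ∃ (Q1 : G.Walk x y) (Q2 : G.Walk y v),
      Q = Q1.append Q2 ∧ ∀ z ∈ Q1.support, z ∈ Bs → z = y := by
  induction Q with
  | @nil u =>
    refine ⟨u, hv, Walk.nil, Walk.nil, rfl, ?_⟩
    intro z hz _
    simpa using hz
  | @cons u c v2 h Q' ih =>
    by_cases hu : u ∈ Bs
    · exact ⟨u, hu, Walk.nil, Walk.cons h Q', rfl, by simp⟩
    · obtain ⟨y, hy, Q1, Q2, hQeq, hQ1⟩ := ih hv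
      refine ⟨y, hy, Walk.cons h Q1, Q2, by rw [hQeq]; rfl, ?_⟩
      intro z hz hzB
      simp only [Walk.support_cons, List.mem_cons] at hz
      rcases hz with rfl | hz
      · exact absurd hzB hu
      · exact hQ1 z hz hzB



lemma core_connOn {B : Set V} (hB : IsBlockSet G B) (w : V) :
    ∀ a ∈ B \ {w}, ∀ b ∈ B \ {w}, ConnOn G (B \ {w}) a b := by
  by_cases hw : w ∈ B
  · exact preconnected_induce_iff.mp (hB.1.2.2 w hw)
  · have heq : B \ {w} = B := by
      apply Set.diff_singleton_eq_self hw
    rw [heq]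
    exact (connected_induce_iff.mp hB.1.2.1).2

lemma path_absorb {B : Set V} (hB : IsBlockSet G B) {b1 b2 : V} (hb1 : b1 ∈ B)
    (hb2 : b2 ∈ B) (hne : b1 ≠ b2) (P : G.Walk b1 b2) (hP : P.IsPath)
    (hint : ∀ z ∈ P.support, z ∈ B → z = b1 ∨ z = b2) :
    ∀ z ∈ P.support, z ∈ B := by
  set B' := B ∪ {y | y ∈ P.support} with hB'def
  have hsubB : B ⊆ B' := Set.subset_union_left
  have hsubP : {y | y ∈ P.support} ⊆ B' := Set.subset_union_right
  have hBc : ∀ a ∈ B, ∀ b ∈ B, ConnOn G B a b := (connected_induce_iff.mp hB.1.2.1).2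
  have key : ∀ a ∈ B', ConnOn G B' a b1 := by
    intro a ha
    rcases ha with ha | ha
    · exact (hBc a ha b1 hb1).mono hsubB
    · have h2 := connOn_support_end P.reverse (a := a) (by simpa using ha)
      have h3 : ConnOn G {y | y ∈ P.support} a b1 := by
        refine h2.mono ?_
        intro x hx
        simpa using hx
      exact h3.mono hsubP
  have hprops : B'.Nonempty ∧ (G.induce B').Connected ∧
      ∀ v ∈ B', (G.induce (B' \ {v})).Preconnected := by
    refine ⟨⟨b1, hsubB hb1⟩, ?_, ?_⟩
    · rw [connected_induce_iff]
      exact ⟨⟨b1, hsubB hb1⟩, fun a ha b hb => (key a ha).trans ((key b hb).symm)⟩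
    · intro w hw
      rw [preconnected_induce_iff]
      obtain ⟨c, hc12, hcw⟩ : ∃ c, (c = b1 ∨ c = b2) ∧ c ≠ w := by
        by_cases h1 : b1 = w
        · exact ⟨b2, Or.inr rfl, fun h2 => hne (h2 ▸ h1)⟩
        · exact ⟨b1, Or.inl rfl, h1⟩
      have hcB : c ∈ B := by rcases hc12 with rfl | rfl <;> assumption
      have hcore := core_connOn hB w
      have hBsub : B \ {w} ⊆ B' \ {w} := fun x hx => ⟨hsubB hx.1, hx.2⟩
      have hkey2 : ∀ a ∈ B' \ {w}, ConnOn G (B' \ {w}) a c := by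
        rintro a ⟨haB', haw⟩
        have hcBw : c ∈ B \ {w} := ⟨hcB, by simpa using hcw⟩
        rcases haB' with haB | haP
        · exact (hcore a ⟨haB, haw⟩ c hcBw).mono hBsub
        · have haw' : a ≠ w := by simpa using haw
          obtain ⟨c', hc'', hc'w, hconn⟩ := path_split P hP w haP haw'
          have hc'B : c' ∈ B := by rcases hc'' with rfl | rfl <;> assumption
          have step1 : ConnOn G (B' \ {w}) a c' :=
            hconn.mono (show {y | y ∈ P.support} \ {w} ⊆ B' \ {w} from fun x hx => ⟨hsubP hx.1, hx.2⟩)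
          exact step1.trans ((hcore c' ⟨hc'B, by simpa using hc'w⟩ c hcBw).mono hBsub)
      exact fun a ha b hb => (hkey2 a ha).trans ((hkey2 b hb).symm)
  have hBeq : B' = B := hB.2 B' hsubB hprops
  intro z hz
  have : z ∈ B' := hsubP hz
  rwa [hBeq] at this

lemma exists_second_vertex {X : Set V} {a b : V} (h : ConnOn G X a b) (hab : a ≠ b) :
    ∃ x, x ∈ X ∧ G.Adj a x := by
  obtain ⟨w, hw⟩ := h
  cases w with
  | nil => exact absurd rfl hab
  | cons h' q => exact ⟨_, hw _ (by simp), h'⟩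

lemma no_outside_attach [DecidableEq V] {B : Set V} (hB : IsBlockSet G B) {v w c0 : V}
    (hv : v ∉ B) (hw : w ∈ B) (hc0 : c0 ∈ B) (hwc : w ≠ c0) (hadj : G.Adj w v)
    (hconn : ConnOn G (Bᶜ ∪ {c0}) v c0) : False := by
  obtain ⟨W, hWs⟩ := hconn
  have hR0path : W.bypass.IsPath := W.bypass_isPath
  have hR0sup : ∀ x ∈ W.bypass.support, x ∈ Bᶜ ∪ {c0} :=
    fun x hx => hWs x (W.support_bypass_subset hx)
  have hwnot : w ∉ W.bypass.support := by
    intro hmem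
    rcases hR0sup w hmem with h | h
    · exact h hw
    · exact hwc (by simpa using h)
  have hPpath : (Walk.cons hadj W.bypass).IsPath := hR0path.cons hwnot
  have hint : ∀ z ∈ (Walk.cons hadj W.bypass).support, z ∈ B → z = w ∨ z = c0 := by
    intro z hz hzB
    simp only [Walk.support_cons, List.mem_cons] at hz
    rcases hz with rfl | hz
    · exact Or.inl rfl
    · rcases hR0sup z hz with h | h
      · exact absurd hzB h
      · exact Or.inr (by simpa using h)
  have habs := path_absorb hB hw hc0 hwc (Walk.cons hadj W.bypass) hPpath hint
  have : v ∈ B := habs v (by simp [Walk.start_mem_support])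
  exact hv this

lemma two_nbrs {B : Set V} (hB : IsBlockSet G B) (hB3 : 3 ≤ B.ncard) {v : V}
    (hv : v ∈ B) (w : V) : ∃ x, x ∈ B ∧ x ≠ w ∧ x ≠ v ∧ G.Adj v x := by
  have hfin : B.Finite := by
    by_contra h
    rw [Set.Infinite.ncard (by exact h)] at hB3
    omega
  have hne : (B \ {v, w}).Nonempty := by
    rw [Set.nonempty_iff_ne_empty]
    intro hemp
    have h1 : B ⊆ {v, w} := by
      intro x hx
      by_contra hx2
      have : x ∈ B \ {v, w} := ⟨hx, hx2⟩
      rw [hemp] at this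
      exact this
    have h2 : B.ncard ≤ ({v, w} : Set V).ncard :=
      Set.ncard_le_ncard h1 (Set.toFinite _)
    have h3 : ({v, w} : Set V).ncard ≤ 2 := by
      have := Set.ncard_insert_le v ({w} : Set V)
      simpa using this
    omega
  obtain ⟨u, huB, huvw⟩ := hne
  have huv : u ≠ v := fun h => huvw (by simp [h])
  have huw : u ≠ w := fun h => huvw (by simp [h])
  by_cases hvw : v = w
  · have hBc : ∀ a ∈ B, ∀ b ∈ B, ConnOn G B a b := (connected_induce_iff.mp hB.1.2.1).2
    obtain ⟨x, hxB, hadj⟩ := exists_second_vertex (hBc v hv u huB) (Ne.symm huv)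
    exact ⟨x, hxB, fun h => hadj.ne' (by rw [h, ← hvw]), hadj.ne', hadj⟩
  · have hcore := core_connOn hB w
    have hvmem : v ∈ B \ {w} := ⟨hv, by simpa using hvw⟩
    have humem : u ∈ B \ {w} := ⟨huB, by simpa using huw⟩
    obtain ⟨x, hxmem, hadj⟩ := exists_second_vertex (hcore v hvmem u humem) (Ne.symm huv)
    exact ⟨x, hxmem.1, by simpa using hxmem.2, hadj.ne', hadj⟩

lemma block_eq_of_two_common {B B' : Set V} (hB : IsBlockSet G B) (hB' : IsBlockSet G B')
    {x y : V} (hxB : x ∈ B) (hxB' : x ∈ B') (hyB : y ∈ B) (hyB' : y ∈ B')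
    (hxy : x ≠ y) : B = B' := by
  set B2 := B ∪ B' with hB2def
  have hsubB : B ⊆ B2 := Set.subset_union_left
  have hsubB' : B' ⊆ B2 := Set.subset_union_right
  have hBc : ∀ a ∈ B, ∀ b ∈ B, ConnOn G B a b := (connected_induce_iff.mp hB.1.2.1).2
  have hBc' : ∀ a ∈ B', ∀ b ∈ B', ConnOn G B' a b := (connected_induce_iff.mp hB'.1.2.1).2
  have key : ∀ a ∈ B2, ConnOn G B2 a x := by
    intro a ha
    rcases ha with ha | ha
    · exact (hBc a ha x hxB).mono hsubB
    · exact (hBc' a ha x hxB').mono hsubB'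
  have hprops : B2.Nonempty ∧ (G.induce B2).Connected ∧
      ∀ v ∈ B2, (G.induce (B2 \ {v})).Preconnected := by
    refine ⟨⟨x, hsubB hxB⟩, ?_, ?_⟩
    · rw [connected_induce_iff]
      exact ⟨⟨x, hsubB hxB⟩, fun a ha b hb => (key a ha).trans ((key b hb).symm)⟩
    · intro w hw
      rw [preconnected_induce_iff]
      obtain ⟨c, hcB, hcB', hcw⟩ : ∃ c, c ∈ B ∧ c ∈ B' ∧ c ≠ w := by
        by_cases h1 : x = w
        · exact ⟨y, hyB, hyB', fun h2 => hxy (h1 ▸ h2 ▸ rfl)⟩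
        · exact ⟨x, hxB, hxB', h1⟩
      have hcore := core_connOn hB w
      have hcore' := core_connOn hB' w
      have hBsub : B \ {w} ⊆ B2 \ {w} := fun z hz => ⟨hsubB hz.1, hz.2⟩
      have hBsub' : B' \ {w} ⊆ B2 \ {w} := fun z hz => ⟨hsubB' hz.1, hz.2⟩
      have hkey2 : ∀ a ∈ B2 \ {w}, ConnOn G (B2 \ {w}) a c := by
        rintro a ⟨haB2, haw⟩
        rcases haB2 with ha | ha
        · exact (hcore a ⟨ha, haw⟩ c ⟨hcB, by simpa using hcw⟩).mono hBsub
        · exact (hcore' a ⟨ha, haw⟩ c ⟨hcB', by simpa using hcw⟩).mono hBsub'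
      exact fun a ha b hb => (hkey2 a ha).trans ((hkey2 b hb).symm)
  have h1 := hB.2 B2 hsubB hprops
  have h2 := hB'.2 B2 hsubB' hprops
  rw [← h1, ← h2]

lemma fort_blocks_forcing {F S : Set V} (hne : F.Nonempty)
    (hdisj : ∀ x ∈ S, x ∉ F)
    (hfort : ∀ v, v ∉ F → ∀ w ∈ F, G.Adj v w → ∃ w', w' ∈ F ∧ w' ≠ w ∧ G.Adj v w') :
    ¬ IsForcingSet G S := by
  rintro ⟨n, hn⟩
  have key : ∀ m, ∀ x ∈ (zfStep G)^[m] S, x ∉ F := by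
    intro m
    induction m with
    | zero => simpa using hdisj
    | succ k ih =>
      rw [Function.iterate_succ_apply']
      intro x hx hxF
      rcases hx with hx | hx
      · exact ih x hx hxF
      · obtain ⟨v, hvM, hNv⟩ := hx
        have hvF : v ∉ F := ih v hvM
        have hxmem : x ∈ G.neighborSet v \ ((zfStep G)^[k] S) := by
          rw [hNv]; exact rfl
        obtain ⟨w', hw'F, hw'x, hadj'⟩ := hfort v hvF x hxF hxmem.1
        have hw'M : w' ∉ (zfStep G)^[k] S := fun h => (ih w' h) hw'F
        have hw'mem : w' ∈ G.neighborSet v \ ((zfStep G)^[k] S) := ⟨hadj', hw'M⟩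
        rw [hNv] at hw'mem
        exact hw'x (by simpa using hw'mem)
  obtain ⟨f0, hf0⟩ := hne
  exact key n f0 (by rw [hn]; trivial) hf0

lemma blocks_two_of_connforcing [DecidableEq V] {S B : Set V} (hG : G.Connected)
    (hS : IsConnForcingSet G S) (hB : IsBlockSet G B) (hB3 : 3 ≤ B.ncard) :
    ∃ x ∈ S ∩ B, ∃ y ∈ S ∩ B, x ≠ y := by
  by_contra hcon
  push_neg at hcon
  have hSc : ∀ a ∈ S, ∀ b ∈ S, ConnOn G S a b := (connected_induce_iff.mp hS.2).2
  have hSne : S.Nonempty := (connected_induce_iff.mp hS.2).1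
  obtain ⟨c0, hc0B, hSX, hreach⟩ :
      ∃ c0, c0 ∈ B ∧ S ⊆ Bᶜ ∪ {c0} ∧ ∀ s ∈ S, ConnOn G (Bᶜ ∪ {c0}) s c0 := by
    by_cases hSB : (S ∩ B).Nonempty
    · obtain ⟨s0, hs0⟩ := hSB
      have hsub : S ⊆ Bᶜ ∪ {s0} := by
        intro z hz
        by_cases hzB : z ∈ B
        · exact Or.inr (by simpa using hcon z ⟨hz, hzB⟩ s0 hs0)
        · exact Or.inl hzB
      exact ⟨s0, hs0.2, hsub, fun s hs => (hSc s hs s0 hs0.1).mono hsub⟩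
    · obtain ⟨s1, hs1⟩ := hSne
      obtain ⟨b0, hb0⟩ := hB.1.1
      obtain ⟨W⟩ := hG.preconnected s1 b0
      obtain ⟨y, hyB, Q1, Q2, hQeq, hQ1⟩ := first_hit W B hb0
      have hsupX : ∀ z ∈ Q1.support, z ∈ Bᶜ ∪ {y} := by
        intro z hz
        by_cases hzB : z ∈ B
        · exact Or.inr (by simpa using hQ1 z hz hzB)
        · exact Or.inl hzB
      have hSsubX : S ⊆ Bᶜ ∪ {y} := by
        intro z hz
        exact Or.inl (fun hzB => hSB ⟨z, hz, hzB⟩)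
      refine ⟨y, hyB, hSsubX, fun s hs => ?_⟩
      exact ((hSc s hs s1 hs1).mono hSsubX).trans ⟨Q1, hsupX⟩
  set X := Bᶜ ∪ {c0} with hXdef
  set F := {v | ConnOn G X v c0}ᶜ with hFdef
  have hmemF : ∀ z, z ∈ F ↔ ¬ ConnOn G X z c0 := by
    intro z; rw [hFdef]; simp
  have hBF : ∀ b, b ∈ B → b ≠ c0 → b ∈ F := by
    intro b hb hbc
    rw [hmemF]
    intro hR
    rcases hR.mem_left with h | h
    · exact h hb
    · exact hbc (by simpa using h)
  have hFne : F.Nonempty := by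
    obtain ⟨x, hxB, _, hxc, _⟩ := two_nbrs hB hB3 hc0B c0
    exact ⟨x, hBF x hxB hxc⟩
  have hdisj : ∀ x ∈ S, x ∉ F := by
    intro s hs hsF
    exact (hmemF s).mp hsF (hreach s hs)
  have hfort : ∀ v, v ∉ F → ∀ w ∈ F, G.Adj v w → ∃ w', w' ∈ F ∧ w' ≠ w ∧ G.Adj v w' := by
    intro v hvF w hwF hadj
    have hvR : ConnOn G X v c0 := by
      by_contra h
      exact hvF ((hmemF v).mpr h)
    by_cases hvc : v = c0
    · subst hvc
      obtain ⟨x, hxB, hxw, hxc, hadjx⟩ := two_nbrs hB hB3 hc0B w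
      exact ⟨x, hBF x hxB hxc, hxw, hadjx⟩
    · exfalso
      have hvB : v ∉ B := by
        rcases hvR.mem_left with h | h
        · exact h
        · exact absurd (by simpa using h) hvc
      by_cases hwX : w ∈ X
      · apply (hmemF w).mp hwF
        obtain ⟨Wv, hWv⟩ := hvR
        refine ⟨Walk.cons hadj.symm Wv, ?_⟩
        intro z hz
        rcases List.mem_cons.mp (by simpa using hz) with rfl | hz2
        · exact hwX
        · exact hWv z hz2
      · have hwB : w ∈ B := by
          by_contra h
          exact hwX (Or.inl h)
        have hwc : w ≠ c0 := fun h => hwX (Or.inr (by simp [h]))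
        exact no_outside_attach hB hvB hwB hc0B hwc hadj.symm hvR
  exact (fort_blocks_forcing hFne hdisj hfort) hS.1

lemma walk_grab_edge [DecidableEq V] {B : Set V} (hB : IsBlockSet G B) :
    ∀ n {u v : V} (W : G.Walk u v), W.length ≤ n → u ∈ B → v ∈ B → u ≠ v →
      ∃ x y, x ∈ B ∧ y ∈ B ∧ s(x, y) ∈ W.edges := by
  intro n
  induction n with
  | zero =>
    intro u v W hlen hu hv huv
    cases W with
    | nil => exact absurd rfl huv
    | cons h Q => simp at hlen
  | succ k ih =>
    intro u v W hlen hu hv huv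
    cases W with
    | nil => exact absurd rfl huv
    | @cons _ z _ h Q =>
      by_cases hzB : z ∈ B
      · exact ⟨u, z, hu, hzB, by simp⟩
      · obtain ⟨y, hyB, Q1, Q2, hQeq, hQ1⟩ := first_hit Q B hv
        by_cases hyu : y = u
        · subst hyu
          have hlen2 : Q2.length ≤ k := by
            have h1 : (Walk.cons h Q).length = Q.length + 1 := by simp
            have h2 : Q.length = Q1.length + Q2.length := by
              rw [hQeq, Walk.length_append]
            omega
          obtain ⟨x, y2, hx, hy2, he⟩ := ih Q2 hlen2 hu hv huv
          refine ⟨x, y2, hx, hy2, ?_⟩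
          rw [Walk.edges_cons, hQeq, Walk.edges_append]
          simp only [List.mem_cons, List.mem_append]
          exact Or.inr (Or.inr he)
        · exfalso
          have hconn : ConnOn G (Bᶜ ∪ {y}) z y := by
            refine ⟨Q1, fun x hx => ?_⟩
            by_cases hxB : x ∈ B
            · exact Or.inr (by simpa using hQ1 x hx hxB)
            · exact Or.inl hxB
          exact no_outside_attach hB hzB hu hyB (fun hh => hyu hh.symm) h hconn

lemma blocks_card_le {V : Type*} [Fintype V] {G : SimpleGraph V} {S : Set V}
    (hSconn : (G.induce S).Connected)
    (htwo : ∀ B : Set V, IsBlockSet G B → 3 ≤ B.ncard →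
      ∃ x ∈ S ∩ B, ∃ y ∈ S ∩ B, x ≠ y) :
    {B : Set V | IsBlockSet G B ∧ 3 ≤ B.ncard}.ncard + 1 ≤ S.ncard := by
  classical
  set H := G.induce S with hHdef
  have hH : H.Connected := hSconn
  obtain ⟨r⟩ : Nonempty ↥S := hH.nonempty
  -- parent function toward r
  have hpar : ∀ u : ↥S, u ≠ r → ∃ p : ↥S, H.Adj p u ∧ H.dist r p + 1 ≤ H.dist r u := by
    intro u hu
    have hreach : H.Reachable u r := hH.preconnected u r
    obtain ⟨W, hWlen⟩ := (hH.preconnected r u).exists_walk_length_eq_dist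
    cases hW : W.reverse with
    | nil => exact absurd rfl hu
    | @cons _ p _ hadj Q =>
      refine ⟨p, hadj.symm, ?_⟩
      have hdp : H.dist r p ≤ Q.reverse.length := SimpleGraph.dist_le _
      have hQlen : Q.reverse.length = Q.length := Walk.length_reverse _
      have hlen : W.length = Q.length + 1 := by
        have := congrArg Walk.length hW
        simpa using this
      omega
  set f : ↥S → ↥S := fun u => if h : u = r then r else Classical.choose (hpar u h)
    with hfdef
  have hfadj : ∀ u, u ≠ r → H.Adj (f u) u := by
    intro u hu
    have := Classical.choose_spec (hpar u hu)
    simpa [hfdef, dif_neg hu] using this.1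
  have hfdist : ∀ u (hu : u ≠ r), H.dist r (f u) + 1 ≤ H.dist r u := by
    intro u hu
    have := Classical.choose_spec (hpar u hu)
    simpa [hfdef, dif_neg hu] using this.2
  -- chains to the root consisting of parent edges
  have chain : ∀ n (u : ↥S), H.dist r u ≤ n →
      ∃ w : H.Walk u r, ∀ e ∈ w.edges, ∃ z : ↥S, z ≠ r ∧ e = s(f z, z) := by
    intro n
    induction n with
    | zero =>
      intro u hd
      have : r = u := (hH.dist_eq_zero_iff).mp (Nat.le_zero.mp hd)
      subst this
      exact ⟨Walk.nil, by simp⟩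
    | succ k ih =>
      intro u hd
      by_cases hu : u = r
      · subst hu
        exact ⟨Walk.nil, by simp⟩
      · have hdp : H.dist r (f u) ≤ k := by
          have := hfdist u hu
          omega
        obtain ⟨w', hw'⟩ := ih (f u) hdp
        refine ⟨Walk.cons (hfadj u hu).symm w', ?_⟩
        intro e he
        rw [Walk.edges_cons, List.mem_cons] at he
        rcases he with rfl | he2
        · exact ⟨u, hu, Sym2.eq_swap⟩
        · exact hw' e he2
  -- for each big block, a parent edge inside it
  have hchoice : ∀ B ∈ {B : Set V | IsBlockSet G B ∧ 3 ≤ B.ncard},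
      ∃ z : ↥S, z ≠ r ∧ (↑z ∈ B) ∧ (↑(f z) ∈ B) := by
    rintro B ⟨hB, hB3⟩
    obtain ⟨x, hxSB, y, hySB, hxy⟩ := htwo B hB hB3
    set u : ↥S := ⟨x, hxSB.1⟩
    set v : ↥S := ⟨y, hySB.1⟩
    obtain ⟨cu, hcu⟩ := chain (H.dist r u) u le_rfl
    obtain ⟨cv, hcv⟩ := chain (H.dist r v) v le_rfl
    set W : H.Walk u v := cu.append cv.reverse with hWdef
    have hWedges : ∀ e ∈ W.edges, ∃ z : ↥S, z ≠ r ∧ e = s(f z, z) := by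
      intro e he
      rw [hWdef, Walk.edges_append, List.mem_append] at he
      rcases he with he | he
      · exact hcu e he
      · rw [Walk.edges_reverse, List.mem_reverse] at he
        exact hcv e he
    set WG : G.Walk x y := W.map (SimpleGraph.Embedding.induce S).toHom with hWGdef
    obtain ⟨x2, y2, hx2, hy2, hedge⟩ :=
      walk_grab_edge hB WG.length WG le_rfl hxSB.2 hySB.2 hxy
    erw [hWGdef, Walk.edges_map, List.mem_map] at hedge
    obtain ⟨e', he'W, he'eq⟩ := hedge
    obtain ⟨z, hzr, rfl⟩ := hWedges e' he'W
    have : s((↑(f z) : V), (↑z : V)) = s(x2, y2) := by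
      simpa using he'eq
    rw [Sym2.eq_iff] at this
    rcases this with ⟨h1, h2⟩ | ⟨h1, h2⟩
    · exact ⟨z, hzr, by rw [h2]; exact hy2, by rw [h1]; exact hx2⟩
    · exact ⟨z, hzr, by rw [h2]; exact hx2, by rw [h1]; exact hy2⟩
  -- injection into S \ {r}
  set Blocks := {B : Set V | IsBlockSet G B ∧ 3 ≤ B.ncard} with hBlocksdef
  set Φ : Set V → V := fun B => if h : B ∈ Blocks then ↑(Classical.choose (hchoice B h))
    else (r : V) with hΦdef
  have hΦmem : ∀ B (h : B ∈ Blocks), Φ B ∈ S \ {(r : V)} := by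
    intro B h
    have hspec := Classical.choose_spec (hchoice B h)
    rw [hΦdef]
    simp only [dif_pos h]
    exact ⟨(Classical.choose (hchoice B h)).2,
      fun hc => hspec.1 (Subtype.ext (by simpa using hc))⟩
  have hinj : Set.InjOn Φ Blocks := by
    intro B hBmem B' hB'mem heq
    have hspec := Classical.choose_spec (hchoice B hBmem)
    have hspec' := Classical.choose_spec (hchoice B' hB'mem)
    set z := Classical.choose (hchoice B hBmem)
    set z' := Classical.choose (hchoice B' hB'mem)
    have hzz' : z = z' := by
      apply Subtype.ext
      have h1 : Φ B = ↑z := by rw [hΦdef]; simp only [dif_pos hBmem]; rfl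
      have h2 : Φ B' = ↑z' := by rw [hΦdef]; simp only [dif_pos hB'mem]; rfl
      rw [← h1, ← h2, heq]
    have hadj : H.Adj (f z) z := hfadj z hspec.1
    have hne : (↑(f z) : V) ≠ ↑z := fun hc => hadj.ne (Subtype.ext hc)
    have hz'B' : (↑z : V) ∈ B' := by rw [hzz']; exact hspec'.2.1
    have hfz'B' : (↑(f z) : V) ∈ B' := by rw [hzz']; exact hspec'.2.2
    exact block_eq_of_two_common hBmem.1 hB'mem.1
      hspec.2.2 hfz'B' hspec.2.1 hz'B' hne
  have h1 : Blocks.ncard = (Φ '' Blocks).ncard := (Set.ncard_image_of_injOn hinj).symm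
  have h2 : Φ '' Blocks ⊆ S \ {(r : V)} := by
    rintro _ ⟨B, hBmem, rfl⟩
    exact hΦmem B hBmem
  have h3 : (Φ '' Blocks).ncard ≤ (S \ {(r : V)}).ncard :=
    Set.ncard_le_ncard h2 (Set.toFinite _)
  have h4 : (S \ {(r : V)}).ncard + 1 = S.ncard :=
    Set.ncard_diff_singleton_add_one r.2 (Set.toFinite _)
  omega

end ZFAux

/-- If `G` is a connected graph, then `F_c(G) ≥ b(G) + 1`. -/
theorem connForcingNumber_ge_blocks {V : Type*} [Fintype V]
    (G : SimpleGraph V) (hG : G.Connected) :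
    numTwoConnBlocks G + 1 ≤ connForcingNumber G := by
  classical
  have hne : Nonempty V := hG.nonempty
  rw [connForcingNumber, numTwoConnBlocks]
  apply le_csInf
  · refine ⟨Set.univ.ncard, Set.univ, ⟨⟨0, by simp⟩, ?_⟩, rfl⟩
    rw [ZFAux.connected_induce_iff]
    refine ⟨Set.univ_nonempty, fun a _ b _ => ?_⟩
    obtain ⟨w⟩ := hG.preconnected a b
    exact ⟨w, fun _ _ => trivial⟩
  · rintro n ⟨S, hS, rfl⟩
    exact ZFAux.blocks_card_le hS.2
      (fun B hB hB3 => ZFAux.blocks_two_of_connforcing hG hS hB hB3)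
end
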